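/- arXiv:2009.07579 — 6 statements merged into one kernel-verified Lean document; each statement's English description precedes it below -/
import Mathlib

section
/- Suppose t_{k+1} > λ t_k > 0 for all k with λ > 1000, μ_{k+1}/μ_k > κ t_{k+1}/t_k with κ > 10, and μ_{k+1}/t_{k+1}^2 < θ μ_k/t_k^2 with 10/λ < θ < 1/100. Then the points s_n produced by one step of the Stieltjes algorithm satisfy s_{n+1} - t_{n+1} > (μ_{n+1}/μ_n)·((λ-1)/λ)·(s_n - t_n); in particular s_{n+1} - t_{n+1} > λ(s_n - t_n) and s_{n+1} > λ s_n. -/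
set_option maxHeartbeats 1000000


/-- Invariance of the lacunarity parameter under one Stieltjes step. -/
theorem stmt2 (N n : ℕ) (lam kap th : ℝ) (μ t s : ℕ → ℝ)
    (hlam : 1000 < lam) (hkap : 10 < kap) (hth1 : 10 / lam < th) (hth2 : th < 1 / 100)
    (ht : ∀ k ∈ Finset.Icc 1 (N - 1), lam * t k < t (k + 1) ∧ 0 < t k)
    (hμpos : ∀ k ∈ Finset.Icc 1 N, 0 < μ k)
    (hgrow : ∀ k ∈ Finset.Icc 1 (N - 1), kap * (t (k + 1) / t k) < μ (k + 1) / μ k)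
    (hdec : ∀ k ∈ Finset.Icc 1 (N - 1), μ (k + 1) / t (k + 1) ^ 2 < th * (μ k / t k ^ 2))
    (hroot : ∀ m ∈ Finset.Icc 1 (N - 1), ∑ k ∈ Finset.Icc 1 N, μ k / (t k - s m) = 0)
    (hint : ∀ m ∈ Finset.Icc 1 (N - 1), t m < s m ∧ s m < t (m + 1))
    (hn : 1 ≤ n) (hnN : n ≤ N - 2) :
    μ (n + 1) / μ n * ((lam - 1) / lam) * (s n - t n) < s (n + 1) - t (n + 1) ∧
    lam * (s n - t n) < s (n + 1) - t (n + 1) ∧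
    lam * s n < s (n + 1) := by
  have hN : n + 2 ≤ N := by omega
  have hlam0 : (0:ℝ) < lam := by linarith
  have hth0 : (0:ℝ) < th := lt_trans (by positivity) hth1
  -- positivity of t
  have tpos : ∀ k, 1 ≤ k → k ≤ N → 0 < t k := by
    intro k h1 h2
    rcases eq_or_lt_of_le h2 with rfl | hk
    · have h := ht (k-1) (by simp [Finset.mem_Icc]; omega)
      rw [show k - 1 + 1 = k by omega] at h
      nlinarith [h.1, h.2]
    · exact (ht k (by simp [Finset.mem_Icc]; omega)).2
  have tstep : ∀ k, 1 ≤ k → k + 1 ≤ N → lam * t k < t (k+1) := by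
    intro k h1 h2
    exact (ht k (by simp [Finset.mem_Icc]; omega)).1
  have tstep' : ∀ k, 1 ≤ k → k + 1 ≤ N → t k < t (k+1) := by
    intro k h1 h2
    have h := tstep k h1 h2
    nlinarith [tpos k h1 (by omega)]
  have tmono : ∀ i j, 1 ≤ i → i ≤ j → j ≤ N → t i ≤ t j := by
    intro i j h1 hij hjN
    induction j with
    | zero => omega
    | succ j ih =>
      rcases Nat.lt_or_ge i (j+1) with h | h
      · exact le_trans (ih (by omega) (by omega)) (le_of_lt (tstep' j (by omega) hjN))
      · have : i = j + 1 := by omega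
        rw [this]
  have μpos : ∀ k, 1 ≤ k → k ≤ N → 0 < μ k := by
    intro k h1 h2; exact hμpos k (by simp [Finset.mem_Icc]; omega)
  -- growth of μ
  have mustep : ∀ k, 1 ≤ k → k + 1 ≤ N → 10 * μ k < μ (k+1) := by
    intro k h1 h2
    have hg := hgrow k (by simp [Finset.mem_Icc]; omega)
    have htk := tpos k h1 (by omega)
    have htk1 := tpos (k+1) (by omega) h2
    have hμk := μpos k h1 (by omega)
    have hr : (1:ℝ) < t (k+1) / t k := (one_lt_div htk).mpr (tstep' k h1 h2)
    have h10 : (10:ℝ) < μ (k+1) / μ k := by nlinarith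
    rw [lt_div_iff₀ hμk] at h10
    linarith
  -- ratio μ/t grows by factor kap
  have ratiostep : ∀ k, 1 ≤ k → k + 1 ≤ N → kap * (μ k / t k) < μ (k+1) / t (k+1) := by
    intro k h1 h2
    have hg := hgrow k (by simp [Finset.mem_Icc]; omega)
    have htk := tpos k h1 (by omega)
    have htk1 := tpos (k+1) (by omega) h2
    have hμk := μpos k h1 (by omega)
    have hμk1 := μpos (k+1) (by omega) h2
    rw [← mul_div_assoc, div_lt_div_iff₀ htk hμk] at hg
    rw [← mul_div_assoc, div_lt_div_iff₀ htk htk1]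
    nlinarith
  -- sum of μ is dominated by last term
  have musum : ∀ j, 1 ≤ j → j ≤ N → (∑ k ∈ Finset.Ioc 0 j, μ k) ≤ (10/9) * μ j := by
    intro j h1 h2
    induction j with
    | zero => omega
    | succ j ih =>
      rcases Nat.lt_or_ge 1 (j+1) with h | h
      · have hsum := ih (by omega) (by omega)
        rw [Finset.sum_Ioc_succ_top (Nat.zero_le j)]
        have := mustep j (by omega) h2
        linarith
      · have : j = 0 := by omega
        subst this
        have : Finset.Ioc 0 1 = {1} := rfl
        rw [this, Finset.sum_singleton]
        have := μpos 1 (by omega) (by omega)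
        linarith
  -- geometric bound for b k = μ k / t k ^ 2
  have bsum : ∀ j, n + 1 ≤ j → j ≤ N →
      (1 - th) * (∑ k ∈ Finset.Ioc (n+1) j, μ k / t k ^ 2) + th * (μ j / t j ^ 2)
        ≤ th * (μ (n+1) / t (n+1) ^ 2) := by
    intro j h1 h2
    induction j with
    | zero => omega
    | succ j ih =>
      rcases Nat.lt_or_ge (n+1) (j+1) with h | h
      · have hsum := ih (by omega) (by omega)
        rw [Finset.sum_Ioc_succ_top (by omega : n + 1 ≤ j)]
        have hd := hdec j (by simp [Finset.mem_Icc]; omega)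
        have hb : (0:ℝ) ≤ μ (j+1) / t (j+1) ^ 2 := by
          have := μpos (j+1) (by omega) h2
          have := tpos (j+1) (by omega) h2
          positivity
        nlinarith
      · have : j + 1 = n + 1 := by omega
        rw [this, Finset.Ioc_self, Finset.sum_empty]
        linarith
  -- the root equation, split
  have eqn : ∀ m, 1 ≤ m → m + 1 ≤ N →
      μ m / (s m - t m) + (∑ k ∈ Finset.Ioc 0 (m-1), μ k / (s m - t k))
        = ∑ k ∈ Finset.Ioc m N, μ k / (t k - s m) := by
    intro m h1 h2
    have hr := hroot m (by simp [Finset.mem_Icc]; omega)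
    rw [show Finset.Icc 1 N = Finset.Ioc 0 N from Finset.Icc_add_one_left_eq_Ioc (a := 0) (b := N)] at hr
    have hsplit : (∑ k ∈ Finset.Ioc 0 m, μ k / (t k - s m))
        + ∑ k ∈ Finset.Ioc m N, μ k / (t k - s m)
        = ∑ k ∈ Finset.Ioc 0 N, μ k / (t k - s m) :=
      Finset.sum_Ioc_consecutive _ (Nat.zero_le m) (by omega)
    have htop := Finset.sum_Ioc_succ_top (Nat.zero_le (m-1)) (fun k => μ k / (t k - s m))
    rw [show m - 1 + 1 = m by omega] at htop
    have hflip : ∑ k ∈ Finset.Ioc 0 (m-1), μ k / (t k - s m)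
        = -∑ k ∈ Finset.Ioc 0 (m-1), μ k / (s m - t k) := by
      rw [← Finset.sum_neg_distrib]
      refine Finset.sum_congr rfl fun k hk => ?_
      rw [show t k - s m = -(s m - t k) by ring, div_neg]
    have hm : μ m / (t m - s m) = -(μ m / (s m - t m)) := by
      rw [show t m - s m = -(s m - t m) by ring, div_neg]
    simp only [htop, hflip, hm] at hsplit
    linarith [hr, hsplit]
  -- bound on left tail
  have Tbound : ∀ m, 1 ≤ m → m + 1 ≤ N →
      (∑ k ∈ Finset.Ioc 0 (m-1), μ k / (s m - t k)) ≤ (2/9) * (μ m / t m) := by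
    intro m h1 h2
    have htm := tpos m h1 (by omega)
    have hμm := μpos m h1 (by omega)
    rcases Nat.lt_or_ge m 2 with hm2 | hm2
    · have : m = 1 := by omega
      subst this
      simp only [Nat.sub_self, Finset.Ioc_self, Finset.sum_empty]
      positivity
    · have hsm := hint m (by simp [Finset.mem_Icc]; omega)
      have hterm : ∀ k ∈ Finset.Ioc 0 (m-1), μ k / (s m - t k) ≤ μ k * (2 / t m) := by
        intro k hk
        simp only [Finset.mem_Ioc] at hk
        have htk := tpos k (by omega) (by omega)
        have hμk := μpos k (by omega) (by omega)
        have hkm : t k ≤ t (m-1) := tmono k (m-1) (by omega) (by omega) (by omega)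
        have hstep := tstep (m-1) (by omega) (by omega)
        rw [show m - 1 + 1 = m by omega] at hstep
        have htm1 : 0 < t (m-1) := tpos (m-1) (by omega) (by omega)
        have hhalf : t k ≤ t m / 2 := by nlinarith
        have hden : t m / 2 ≤ s m - t k := by nlinarith [hsm.1]
        have hden0 : (0:ℝ) < t m / 2 := by positivity
        calc μ k / (s m - t k) ≤ μ k / (t m / 2) := by
              apply div_le_div_of_nonneg_left (le_of_lt hμk) hden0 hden
          _ = μ k * (2 / t m) := by field_simp
      have hsum := Finset.sum_le_sum hterm
      rw [← Finset.sum_mul] at hsum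
      have hmusum : (∑ k ∈ Finset.Ioc 0 (m-1), μ k) ≤ (10/9) * μ (m-1) :=
        musum (m-1) (by omega) (by omega)
      have hmust := mustep (m-1) (by omega) (by omega)
      rw [show m - 1 + 1 = m by omega] at hmust
      have h2tm : (0:ℝ) < 2 / t m := by positivity
      have hμm1 : 0 < μ (m-1) := μpos (m-1) (by omega) (by omega)
      calc (∑ k ∈ Finset.Ioc 0 (m-1), μ k / (s m - t k))
          ≤ (∑ k ∈ Finset.Ioc 0 (m-1), μ k) * (2 / t m) := hsum
        _ ≤ ((10/9) * μ (m-1)) * (2 / t m) := by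
            apply mul_le_mul_of_nonneg_right hmusum (le_of_lt h2tm)
        _ ≤ ((10/9) * (μ m / 10)) * (2 / t m) := by
            apply mul_le_mul_of_nonneg_right _ (le_of_lt h2tm)
            nlinarith
        _ = (2/9) * (μ m / t m) := by ring
  -- positivity of right-tail terms
  have gnonneg : ∀ m, 1 ≤ m → m + 1 ≤ N → ∀ k ∈ Finset.Ioc m N,
      0 ≤ μ k / (t k - s m) := by
    intro m h1 h2 k hk
    simp only [Finset.mem_Ioc] at hk
    have hμk := μpos k (by omega) (by omega)
    have hsm := hint m (by simp [Finset.mem_Icc]; omega)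
    have : t (m+1) ≤ t k := tmono (m+1) k (by omega) (by omega) (by omega)
    have : 0 < t k - s m := by linarith [hsm.2]
    positivity
  -- a priori bound : s m is close to t m
  have dbound : ∀ m, 1 ≤ m → m + 1 ≤ N → s m - t m < t m / 9 := by
    intro m h1 h2
    have heq := eqn m h1 h2
    have hsm := hint m (by simp [Finset.mem_Icc]; omega)
    have htm := tpos m h1 (by omega)
    have htm1 := tpos (m+1) (by omega) h2
    have hμm := μpos m h1 (by omega)
    have hμm1 := μpos (m+1) (by omega) h2
    have hd0 : 0 < s m - t m := by linarith [hsm.1]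
    have hsingle : μ (m+1) / (t (m+1) - s m) ≤ ∑ k ∈ Finset.Ioc m N, μ k / (t k - s m) :=
      Finset.single_le_sum (gnonneg m h1 h2) (by simp [Finset.mem_Ioc]; omega)
    have he0 : 0 < t (m+1) - s m := by linarith [hsm.2]
    have he1 : t (m+1) - s m ≤ t (m+1) := by linarith [hsm.1]
    have hfrac : μ (m+1) / t (m+1) ≤ μ (m+1) / (t (m+1) - s m) :=
      div_le_div_of_nonneg_left (le_of_lt hμm1) he0 he1
    have hrat := ratiostep m h1 h2
    have hT := Tbound m h1 h2
    have hmain : 9 * (μ m / t m) < μ m / (s m - t m) := by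
      have : μ m / t m > 0 := by positivity
      nlinarith
    have hmain2 : (9 * μ m) / t m < μ m / (s m - t m) := by
      have h9 : (9:ℝ) * (μ m / t m) = (9 * μ m) / t m := by ring
      linarith [hmain, h9.ge, h9.le]
    rw [div_lt_div_iff₀ htm hd0] at hmain2
    nlinarith [hμm, hmain2]
  -- specialize to n and n+1
  have hintn := hint n (by simp [Finset.mem_Icc]; omega)
  have hintn1 := hint (n+1) (by simp [Finset.mem_Icc]; omega)
  have htn := tpos n hn (by omega)
  have htn1 := tpos (n+1) (by omega) (by omega)
  have htn2 := tpos (n+2) (by omega) hN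
  have hμn := μpos n hn (by omega)
  have hμn1 := μpos (n+1) (by omega) (by omega)
  have hd1 : 0 < s n - t n := by linarith [hintn.1]
  have hd2 : 0 < s (n+1) - t (n+1) := by linarith [hintn1.1]
  have hdb2 : s (n+1) - t (n+1) < t (n+1) / 9 := dbound (n+1) (by omega) hN
  have hstep1 : lam * t n < t (n+1) := tstep n hn (by omega)
  have hstep2 : lam * t (n+1) < t (n+2) := tstep (n+1) (by omega) hN
  -- termwise comparison on Ioc (n+1) N
  have hterm : ∀ k ∈ Finset.Ioc (n+1) N,
      μ k / (t k - s (n+1)) ≤ μ k / (t k - s n) + (8 * t (n+1)) * (μ k / t k ^ 2) := by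
    intro k hk
    simp only [Finset.mem_Ioc] at hk
    have htk := tpos k (by omega) hk.2
    have hμk := μpos k (by omega) hk.2
    have hk2 : t (n+2) ≤ t k := tmono (n+2) k (by omega) (by omega) hk.2
    have hlamtk : lam * t (n+1) < t k := by linarith
    have htn1k : t (n+1) < t k / 1000 := by nlinarith
    have hs1 : s (n+1) < (10/9) * t (n+1) := by linarith [hdb2]
    have hs1k : s (n+1) < t k / 2 := by nlinarith
    have ha : t k / 2 < t k - s (n+1) := by linarith
    have ha0 : 0 < t k - s (n+1) := by nlinarith
    have hc : t k / 2 < t k - s n := by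
      have h1 : s n < t (n+1) := hintn.2
      linarith [htn1k]
    have hc0 : 0 < t k - s n := by nlinarith
    have hdiff : s (n+1) - s n ≤ 2 * t (n+1) := by
      have : 0 < s n := by linarith [hintn.1]
      linarith [hs1]
    have hkey : μ k / (t k - s (n+1)) - μ k / (t k - s n)
        = μ k * ((t k - s n) - (t k - s (n+1))) / ((t k - s (n+1)) * (t k - s n)) := by
      field_simp
    have hnum : μ k * ((t k - s n) - (t k - s (n+1))) ≤ μ k * (2 * t (n+1)) := by
      have h0 : (t k - s n) - (t k - s (n+1)) = s (n+1) - s n := by ring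
      rw [h0]
      exact mul_le_mul_of_nonneg_left hdiff (le_of_lt hμk)
    have hden : t k ^ 2 / 4 ≤ (t k - s (n+1)) * (t k - s n) := by
      nlinarith [mul_le_mul (le_of_lt ha) (le_of_lt hc) (by positivity : (0:ℝ) ≤ t k / 2)
        (le_of_lt ha0)]
    have hden0 : (0:ℝ) < t k ^ 2 / 4 := by positivity
    have hq : μ k * ((t k - s n) - (t k - s (n+1))) / ((t k - s (n+1)) * (t k - s n))
        ≤ μ k * (2 * t (n+1)) / (t k ^ 2 / 4) :=
      div_le_div₀ (by positivity) hnum hden0 hden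
    have heq2 : μ k * (2 * t (n+1)) / (t k ^ 2 / 4) = (8 * t (n+1)) * (μ k / t k ^ 2) := by
      field_simp
      ring
    linarith [hkey.le, hkey.ge, hq, heq2.le, heq2.ge]
  have hsum1 : (∑ k ∈ Finset.Ioc (n+1) N, μ k / (t k - s (n+1)))
      ≤ (∑ k ∈ Finset.Ioc (n+1) N, μ k / (t k - s n))
        + (8 * t (n+1)) * (∑ k ∈ Finset.Ioc (n+1) N, μ k / t k ^ 2) := by
    calc (∑ k ∈ Finset.Ioc (n+1) N, μ k / (t k - s (n+1)))
        ≤ ∑ k ∈ Finset.Ioc (n+1) N, (μ k / (t k - s n) + (8 * t (n+1)) * (μ k / t k ^ 2)) :=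
          Finset.sum_le_sum hterm
      _ = _ := by rw [Finset.sum_add_distrib, ← Finset.mul_sum]
  -- bound the square-decay tail
  have hB0 : 0 ≤ ∑ k ∈ Finset.Ioc (n+1) N, μ k / t k ^ 2 := by
    apply Finset.sum_nonneg
    intro k hk
    simp only [Finset.mem_Ioc] at hk
    have := μpos k (by omega) hk.2
    have := tpos k (by omega) hk.2
    positivity
  have hBsum := bsum N (by omega) (le_refl N)
  have hbN : 0 ≤ μ N / t N ^ 2 := by
    have := μpos N (by omega) (le_refl N)
    have := tpos N (by omega) (le_refl N)
    positivity
  have hb1 : 0 < μ (n+1) / t (n+1) ^ 2 := by positivity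
  have hB : (∑ k ∈ Finset.Ioc (n+1) N, μ k / t k ^ 2) ≤ (1/99) * (μ (n+1) / t (n+1) ^ 2) := by
    nlinarith [hBsum, hbN, hB0, hb1]
  have h8 : (8 * t (n+1)) * (∑ k ∈ Finset.Ioc (n+1) N, μ k / t k ^ 2)
      ≤ (8/99) * (μ (n+1) / t (n+1)) := by
    have hne : t (n+1) ≠ 0 := ne_of_gt htn1
    have he : (8 * t (n+1)) * ((1/99) * (μ (n+1) / t (n+1) ^ 2))
        = (8/99) * (μ (n+1) / t (n+1)) := by
      field_simp
    calc (8 * t (n+1)) * (∑ k ∈ Finset.Ioc (n+1) N, μ k / t k ^ 2)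
        ≤ (8 * t (n+1)) * ((1/99) * (μ (n+1) / t (n+1) ^ 2)) :=
          mul_le_mul_of_nonneg_left hB (by positivity)
      _ = (8/99) * (μ (n+1) / t (n+1)) := he
  -- the two equations
  have heqn := eqn n hn (by omega)
  have heqn1 := eqn (n+1) (by omega) hN
  rw [show n + 1 - 1 = n from rfl] at heqn1
  have hsplitb : (∑ k ∈ Finset.Ioc n (n+1), μ k / (t k - s n))
      + ∑ k ∈ Finset.Ioc (n+1) N, μ k / (t k - s n)
      = ∑ k ∈ Finset.Ioc n N, μ k / (t k - s n) :=
    Finset.sum_Ioc_consecutive _ (by omega) (by omega)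
  have hone : ∑ k ∈ Finset.Ioc n (n+1), μ k / (t k - s n) = μ (n+1) / (t (n+1) - s n) := by
    rw [Finset.sum_Ioc_succ_top (le_refl n), Finset.Ioc_self, Finset.sum_empty, zero_add]
  have hT1pos : 0 < ∑ k ∈ Finset.Ioc 0 n, μ k / (s (n+1) - t k) := by
    apply Finset.sum_pos
    · intro k hk
      simp only [Finset.mem_Ioc] at hk
      have hμk := μpos k (by omega) (by omega)
      have htkn : t k ≤ t n := tmono k n (by omega) hk.2 (by omega)
      have hts : t k < s (n+1) := by
        have := tstep' n hn (by omega)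
        linarith [hintn1.1]
      have : 0 < s (n+1) - t k := by linarith
      positivity
    · exact ⟨n, by simp [Finset.mem_Ioc]; omega⟩
  have hTn := Tbound n hn (by omega)
  have hen0 : 0 < t (n+1) - s n := by linarith [hintn.2]
  have hen1 : t (n+1) - s n ≤ t (n+1) := by linarith [hintn.1, htn]
  have hfracn : μ (n+1) / t (n+1) ≤ μ (n+1) / (t (n+1) - s n) :=
    div_le_div_of_nonneg_left (le_of_lt hμn1) hen0 hen1
  have hratn := ratiostep n hn (by omega)
  have hXpos : 0 < μ (n+1) / t (n+1) := by positivity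
  have hμtn : μ n / t n < (1/10) * (μ (n+1) / t (n+1)) := by
    have : 0 < μ n / t n := by positivity
    nlinarith [hratn]
  -- the key comparison
  have hfinal : μ (n+1) / (s (n+1) - t (n+1)) < μ n / (s n - t n) := by
    linarith [heqn, heqn1, hsum1, h8, hT1pos, hTn, hμtn, hfracn, hsplitb, hone, hXpos]
  rw [div_lt_div_iff₀ hd2 hd1] at hfinal
  -- ratio of μ's is large
  have hR : 10 * lam * μ n < μ (n+1) := by
    have hg := hgrow n (by simp [Finset.mem_Icc]; omega)
    have hr1 : lam < t (n+1) / t n := (lt_div_iff₀ htn).mpr (by linarith [hstep1])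
    have h10 : 10 * lam < μ (n+1) / μ n := by nlinarith
    rw [lt_div_iff₀ hμn] at h10
    linarith
  -- second conclusion
  have goal2 : lam * (s n - t n) < s (n+1) - t (n+1) := by
    have h1 : 10 * lam * μ n * (s n - t n) < μ n * (s (n+1) - t (n+1)) :=
      lt_trans (mul_lt_mul_of_pos_right hR hd1) hfinal
    nlinarith only [h1, hμn, mul_pos (mul_pos hlam0 hμn) hd1]
  -- first conclusion
  have goal1 : μ (n + 1) / μ n * ((lam - 1) / lam) * (s n - t n) < s (n + 1) - t (n + 1) := by
    have hq1 : μ (n+1) / μ n * (s n - t n) < s (n+1) - t (n+1) := by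
      rw [div_mul_eq_mul_div, div_lt_iff₀ hμn]
      linarith [hfinal]
    have hq2 : (lam - 1) / lam < 1 := (div_lt_one hlam0).mpr (by linarith)
    have hq3 : 0 < (lam - 1) / lam := by
      apply div_pos (by linarith) hlam0
    have hq0 : 0 < μ (n+1) / μ n * (s n - t n) := by positivity
    nlinarith only [hq1, hq2, hq3, hq0]
  refine ⟨goal1, goal2, ?_⟩
  have hexp : lam * s n = lam * t n + lam * (s n - t n) := by ring
  linarith [hstep1, goal2, hintn1.1, hexp.le, hexp.ge]
end

section
/- Under one step of the Stieltjes algorithm, if t_{k+1} > λ t_k > 0 with λ > 1000, μ_{k+1}/μ_k > κ t_{k+1}/t_k with κ > 10, and μ_{k+1}/t_{k+1}^2 < θ μ_k/t_k^2 with 10/λ < θ < 1/10, then the new weights w_n = (Σ_k μ_k/(t_k - s_n)^2)^{-1} satisfy w_{n+1}/w_n > μ_{n+1}/μ_n for all 1 ≤ n ≤ N-2. -/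
lemma stmt3aux1 (a b c d mk : ℝ) (hmk : 0 < mk) (htk : 0 < c) (hd : 0 < d)
    (ha : (998/1000) * c ≤ a) (hb : (998/1000) * c ≤ b) (hab : a - b ≤ (111/100) * d) :
    mk / b ≤ mk / a + (112/100) * d * (mk / c ^ 2) := by
  have ha0 : 0 < a := lt_of_lt_of_le (by positivity) ha
  have hb0 : 0 < b := lt_of_lt_of_le (by positivity) hb
  have eR : mk / a + (112/100) * d * (mk / c ^ 2)
      = (mk * c ^ 2 + (112/100) * d * mk * a) / (a * c ^ 2) := by
    field_simp
  rw [eR, div_le_div_iff₀ hb0 (by positivity)]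
  have h1 : (998/1000 * c) * (998/1000 * c) ≤ a * b :=
    mul_le_mul ha hb (by positivity) ha0.le
  have h2 : mk * (a - b) ≤ mk * ((111/100) * d) :=
    mul_le_mul_of_nonneg_left hab hmk.le
  nlinarith [mul_le_mul_of_nonneg_right h2 (sq_nonneg c),
    mul_le_mul_of_nonneg_left h1 (mul_nonneg hmk.le hd.le),
    mul_nonneg (mul_nonneg hmk.le hd.le) (sq_nonneg c)]

lemma stmt3aux2 (a c mk : ℝ) (hmk : 0 < mk) (hc : 0 < c)
    (ha : (998/1000) * c ≤ a) : mk / a ^ 2 ≤ (1005/1000) * (mk / c ^ 2) := by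
  have ha0 : 0 < a := lt_of_lt_of_le (by positivity) ha
  have e : (1005/1000) * (mk / c ^ 2) = ((1005/1000) * mk) / c ^ 2 := by ring
  rw [e, div_le_div_iff₀ (by positivity) (by positivity)]
  nlinarith [mul_le_mul_of_nonneg_left (mul_le_mul ha ha (by positivity) ha0.le) hmk.le]


lemma stmt3aux3 (P Q g Z Y : ℝ) (hg : 0 < g) (hPg : g ≤ P) (hQ0 : 0 ≤ Q)
    (hQP : Q + (80/100) * g ≤ P) (hZ : Z ≤ Q^2 + (3/10) * g^2)
    (hY : (P - (1/100) * g)^2 ≤ Y) : Z < Y := by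
  nlinarith [pow_le_pow_left₀ hQ0 (by linarith : Q ≤ P - (80/100)*g) 2,
    mul_le_mul_of_nonneg_left hPg hg.le, mul_pos hg hg]

lemma stmt3aux4 (L R M1 M2 T : ℝ) (hM1 : 0 < M1) (hM2 : 0 < M2) (hT : 0 < T)
    (hmu : 10000 * M1 < M2)
    (hL : L ≤ (1006/1000) * (M1 / T^2))
    (hR : R ≤ (1005/1000) * ((1/9) * (M2 / T^2))) :
    M2 * L + M2 * R ≤ (3/10) * (M2/T)^2 := by
  have hX : 0 < (T^2)⁻¹ := by positivity
  have e1 : M1 / T^2 = M1 * (T^2)⁻¹ := div_eq_mul_inv _ _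
  have e2 : M2 / T^2 = M2 * (T^2)⁻¹ := div_eq_mul_inv _ _
  have e3 : (M2/T)^2 = M2^2 * (T^2)⁻¹ := by rw [div_pow, div_eq_mul_inv]
  rw [e1] at hL; rw [e2] at hR; rw [e3]
  nlinarith [mul_le_mul_of_nonneg_left hL hM2.le, mul_le_mul_of_nonneg_left hR hM2.le,
    mul_le_mul_of_nonneg_left hmu.le (mul_nonneg hM2.le hX.le)]

set_option maxHeartbeats 1600000 in
/-- Lower bound: the ratio of successive weights does not decrease
under one step of the Stieltjes algorithm. -/
theorem stmt3 (N n : ℕ) (lam kap th : ℝ) (μ t s w : ℕ → ℝ)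
    (hlam : 1000 < lam) (hkap : 10 < kap) (hth1 : 10 / lam < th) (hth2 : th < 1 / 10)
    (ht : ∀ k ∈ Finset.Icc 1 (N - 1), lam * t k < t (k + 1) ∧ 0 < t k)
    (hμpos : ∀ k ∈ Finset.Icc 1 N, 0 < μ k)
    (hgrow : ∀ k ∈ Finset.Icc 1 (N - 1), kap * (t (k + 1) / t k) < μ (k + 1) / μ k)
    (hdec : ∀ k ∈ Finset.Icc 1 (N - 1), μ (k + 1) / t (k + 1) ^ 2 < th * (μ k / t k ^ 2))
    (hroot : ∀ m ∈ Finset.Icc 1 (N - 1), ∑ k ∈ Finset.Icc 1 N, μ k / (t k - s m) = 0)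
    (hint : ∀ m ∈ Finset.Icc 1 (N - 1), t m < s m ∧ s m < t (m + 1))
    (hw : ∀ m ∈ Finset.Icc 1 (N - 1),
      w m = (∑ k ∈ Finset.Icc 1 N, μ k / (t k - s m) ^ 2)⁻¹)
    (hn : 1 ≤ n) (hnN : n ≤ N - 2) :
    μ (n + 1) / μ n < w (n + 1) / w n := by
  have hN : n + 2 ≤ N := by omega
  have hlam0 : (0:ℝ) < lam := by linarith
  have htpos : ∀ k, 1 ≤ k → k ≤ N → 0 < t k := by
    intro k hk1 hk2
    by_cases h : k ≤ N - 1
    · exact (ht k (Finset.mem_Icc.mpr ⟨hk1, h⟩)).2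
    · have hkN : k = N := by omega
      have h1 : N - 1 ∈ Finset.Icc 1 (N-1) := by simp [Finset.mem_Icc]; omega
      obtain ⟨h2, h3⟩ := ht (N-1) h1
      have he : N - 1 + 1 = N := by omega
      rw [he] at h2
      subst hkN
      nlinarith
  have hstep : ∀ k, 1 ≤ k → k + 1 ≤ N → lam * t k < t (k+1) := by
    intro k hk1 hk2
    exact (ht k (Finset.mem_Icc.mpr ⟨hk1, by omega⟩)).1
  have tgap : ∀ i j, 1 ≤ i → i < j → j ≤ N → lam * t i < t j := by
    intro i j hi hij hjN
    induction j with
    | zero => omega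
    | succ j ih =>
      rcases Nat.lt_or_ge i j with h | h
      · have hj : lam * t i < t j := ih (by omega) (by omega)
        have h2 : lam * t j < t (j+1) := hstep j (by omega) hjN
        have htj : 0 < t j := htpos j (by omega) (by omega)
        nlinarith
      · have : i = j := by omega
        subst this
        exact hstep i hi hjN
  have tmono : ∀ i j, 1 ≤ i → i ≤ j → j ≤ N → t i ≤ t j := by
    intro i j hi hij hjN
    rcases Nat.eq_or_lt_of_le hij with h | h
    · rw [h]
    · have h1 := tgap i j hi h hjN
      have h2 := htpos i hi (by omega)
      nlinarith
  have hmustep : ∀ k, 1 ≤ k → k + 1 ≤ N → 10000 * μ k < μ (k+1) := by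
    intro k hk1 hk2
    have hg := hgrow k (Finset.mem_Icc.mpr ⟨hk1, by omega⟩)
    have htk := htpos k hk1 (by omega)
    have htk1 := htpos (k+1) (by omega) hk2
    have hμk := hμpos k (Finset.mem_Icc.mpr ⟨hk1, by omega⟩)
    have hμk1 := hμpos (k+1) (Finset.mem_Icc.mpr ⟨by omega, hk2⟩)
    have hs := hstep k hk1 hk2
    have h2 : lam < t (k+1)/t k := by rw [lt_div_iff₀ htk]; linarith
    have h3 : (10000:ℝ) < kap * (t (k+1)/t k) := by nlinarith
    have h4 : (10000:ℝ) < μ (k+1)/μ k := by linarith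
    rw [lt_div_iff₀ hμk] at h4
    linarith
  have hμposN : ∀ k, 1 ≤ k → k ≤ N → 0 < μ k := fun k h1 h2 =>
    hμpos k (Finset.mem_Icc.mpr ⟨h1, h2⟩)
  -- partial-mass bound
  have hB : ∀ m, 1 ≤ m → m ≤ N → (∑ k ∈ Finset.Ioc 0 m, μ k) ≤ (10000/9999) * μ m := by
    intro m hm
    induction m with
    | zero => omega
    | succ m ih =>
      intro hmN
      rcases Nat.eq_or_lt_of_le hm with h | h
      · have : m = 0 := by omega
        subst this
        simp
        have := hμposN 1 le_rfl (by omega)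
        linarith
      · have hm1 : 1 ≤ m := by omega
        have ihm := ih hm1 (by omega)
        rw [Finset.sum_Ioc_succ_top (by omega)]
        have := hmustep m hm1 hmN
        have := hμposN m hm1 (by omega)
        linarith
  -- tail quadratic-moment bound, downward induction
  have hQ : ∀ d m, 1 ≤ m → m + d = N → (∑ k ∈ Finset.Icc m N, μ k / t k ^ 2) ≤ (10/9) * (μ m / t m ^ 2) := by
    intro d
    induction d with
    | zero =>
      intro m hm1 hmN
      have : m = N := by omega
      subst this
      rw [Finset.Icc_self, Finset.sum_singleton]
      have h1 := hμposN m hm1 le_rfl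
      have h2 := htpos m hm1 le_rfl
      have : 0 < μ m / t m ^ 2 := by positivity
      linarith
    | succ d ih =>
      intro m hm1 hmN
      have hmN' : m + 1 ≤ N := by omega
      have hsplit : ∑ k ∈ Finset.Icc m N, μ k / t k ^ 2
          = μ m / t m ^ 2 + ∑ k ∈ Finset.Icc (m+1) N, μ k / t k ^ 2 := by
        rw [Finset.Icc_add_one_left_eq_Ioc, ← Finset.Ioc_insert_left (by omega : m ≤ N),
          Finset.sum_insert (by simp)]
      rw [hsplit]
      have ihm := ih (m+1) (by omega) (by omega)
      have hd := hdec m (Finset.mem_Icc.mpr ⟨hm1, by omega⟩)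
      have h1 := hμposN m hm1 (by omega)
      have h2 := htpos m hm1 (by omega)
      have hpos : 0 < μ m / t m ^ 2 := by positivity
      have : μ (m+1) / t (m+1) ^ 2 < (1/10) * (μ m / t m ^ 2) := by nlinarith
      linarith
    -- basic root location
  have hintm : ∀ m, 1 ≤ m → m + 1 ≤ N → t m < s m ∧ s m < t (m+1) := by
    intro m h1 h2
    exact hint m (Finset.mem_Icc.mpr ⟨h1, by omega⟩)
  have hts : ∀ m, 1 ≤ m → m + 1 ≤ N → ∀ k, 1 ≤ k → k ≤ m → t k < s m := by
    intro m h1 h2 k hk1 hk2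
    have := (hintm m h1 h2).1
    have := tmono k m hk1 hk2 (by omega)
    linarith
  have hst : ∀ m, 1 ≤ m → m + 1 ≤ N → ∀ k, m + 1 ≤ k → k ≤ N → s m < t k := by
    intro m h1 h2 k hk1 hk2
    have := (hintm m h1 h2).2
    have := tmono (m+1) k (by omega) hk1 hk2
    linarith
  have hspos : ∀ m, 1 ≤ m → m + 1 ≤ N → 0 < s m := by
    intro m h1 h2
    have := (hintm m h1 h2).1
    have := htpos m h1 (by omega)
    linarith
  -- A m = P m : the root equation split
  have hAP : ∀ m, 1 ≤ m → m + 1 ≤ N →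
      (∑ k ∈ Finset.Ioc 0 m, μ k / (s m - t k)) = ∑ k ∈ Finset.Ioc m N, μ k / (t k - s m) := by
    intro m h1 h2
    have hr := hroot m (Finset.mem_Icc.mpr ⟨h1, by omega⟩)
    rw [show (1:ℕ) = 0 + 1 from rfl, Finset.Icc_add_one_left_eq_Ioc] at hr
    rw [← Finset.sum_Ioc_consecutive _ (by omega : 0 ≤ m) (by omega : m ≤ N)] at hr
    have hneg : (∑ k ∈ Finset.Ioc 0 m, μ k / (t k - s m))
        = - ∑ k ∈ Finset.Ioc 0 m, μ k / (s m - t k) := by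
      rw [← Finset.sum_neg_distrib]
      apply Finset.sum_congr rfl
      intro k _
      rw [← div_neg]
      ring_nf
    rw [hneg] at hr
    linarith
  -- positivity of P m tail terms
  have hPterm : ∀ m, 1 ≤ m → m + 1 ≤ N → ∀ k ∈ Finset.Ioc m N, 0 < μ k / (t k - s m) := by
    intro m h1 h2 k hk
    rw [Finset.mem_Ioc] at hk
    have := hst m h1 h2 k (by omega) hk.2
    have := hμposN k (by omega) hk.2
    exact div_pos this (by linarith)
  have hAterm : ∀ m, 1 ≤ m → m + 1 ≤ N → ∀ k ∈ Finset.Ioc 0 m, 0 < μ k / (s m - t k) := by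
    intro m h1 h2 k hk
    rw [Finset.mem_Ioc] at hk
    have := hts m h1 h2 k (by omega) hk.2
    have := hμposN k (by omega) (by omega)
    exact div_pos this (by linarith)
  -- single-term lower bound on P m
  have hPsingle : ∀ m, 1 ≤ m → m + 1 ≤ N →
      μ (m+1) / (t (m+1) - s m) ≤ ∑ k ∈ Finset.Ioc m N, μ k / (t k - s m) := by
    intro m h1 h2
    apply Finset.single_le_sum (f := fun k => μ k / (t k - s m))
    · intro k hk
      exact le_of_lt (hPterm m h1 h2 k hk)
    · rw [Finset.mem_Ioc]; omega
  -- key location bound : s m ≤ 1.11 t m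
  have hsloc : ∀ m, 1 ≤ m → m + 1 ≤ N → s m ≤ (111/100) * t m := by
    intro m h1 h2
    have htm := htpos m h1 (by omega)
    have htm1 := htpos (m+1) (by omega) h2
    have hμm := hμposN m h1 (by omega)
    have hμm1 := hμposN (m+1) (by omega) h2
    have hsm := hintm m h1 h2
    have hsp := hspos m h1 h2
    -- A m ≤ B m / (s m - t m)
    have hA_up : (∑ k ∈ Finset.Ioc 0 m, μ k / (s m - t k))
        ≤ (∑ k ∈ Finset.Ioc 0 m, μ k) / (s m - t m) := by
      rw [Finset.sum_div]
      apply Finset.sum_le_sum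
      intro k hk
      rw [Finset.mem_Ioc] at hk
      have h3 : t k ≤ t m := tmono k m (by omega) hk.2 (by omega)
      have h4 : t k < s m := hts m h1 h2 k (by omega) hk.2
      apply div_le_div_of_nonneg_left (le_of_lt (hμposN k (by omega) (by omega)))
        (by linarith) (by linarith)
    have hP_lo := hPsingle m h1 h2
    have hBm := hB m h1 (by omega)
    have hAP' := hAP m h1 h2
    -- μ(m+1) (s m - t m) ≤ B m (t(m+1) - s m) ≤ B m t(m+1)
    have hkey : μ (m+1) * (s m - t m) ≤ ((10000:ℝ)/9999) * μ m * (t (m+1)) := by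
      have e1 : μ (m+1) / (t (m+1) - s m) ≤ (∑ k ∈ Finset.Ioc 0 m, μ k) / (s m - t m) := by
        rw [hAP'] at hA_up
        linarith
      rw [div_le_div_iff₀ (by linarith) (by linarith)] at e1
      have hBpos : 0 ≤ (∑ k ∈ Finset.Ioc 0 m, μ k) := by
        apply Finset.sum_nonneg
        intro k hk
        rw [Finset.mem_Ioc] at hk
        exact le_of_lt (hμposN k (by omega) (by omega))
      nlinarith
    -- hgrow : kap t(m+1) μ m < μ(m+1) t m, kap > 10
    have hg := hgrow m (Finset.mem_Icc.mpr ⟨h1, by omega⟩)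
    have h10 : 10 * (t (m+1) * μ m) < μ (m+1) * t m := by
      have e1 : kap * (t (m+1)/t m) * (t m * μ m) < (μ (m+1)/μ m) * (t m * μ m) :=
        mul_lt_mul_of_pos_right hg (by positivity)
      have e2 : kap * (t (m+1)/t m) * (t m * μ m) = kap * (t (m+1) * μ m) := by
        field_simp
      have e3 : (μ (m+1)/μ m) * (t m * μ m) = μ (m+1) * t m := by
        field_simp
      have h4 : 0 < t (m+1) * μ m := by positivity
      rw [e2, e3] at e1
      have h5 : 10 * (t (m+1) * μ m) < kap * (t (m+1) * μ m) :=
        mul_lt_mul_of_pos_right hkap h4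
      linarith
    have h11 : μ (m+1) * (s m - t m) ≤ μ (m+1) * ((1000/9999) * t m) := by linarith
    have h12 : s m - t m ≤ (1000/9999) * t m := le_of_mul_le_mul_left h11 hμm1
    linarith
  -- denominator bounds : for k ≥ m+1, t k - s m ≥ 0.998 t k
  have hden : ∀ m, 1 ≤ m → m + 1 ≤ N → ∀ k, m + 1 ≤ k → k ≤ N →
      (998/1000) * t k ≤ t k - s m := by
    intro m h1 h2 k hk1 hk2
    have hg := tgap m k h1 (by omega) hk2
    have htm := htpos m h1 (by omega)
    have hs := hsloc m h1 h2
    have h3 : 1000 * t m < t k := by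
      have := mul_lt_mul_of_pos_right hlam htm
      linarith
    linarith
  -- frequently used positivity
  have htn1 := htpos (n+1) (by omega) (by omega)
  have hμn1 := hμposN (n+1) (by omega) (by omega)
  have hμn := hμposN n hn (by omega)
  have htn := htpos n hn (by omega)
  have hg0 : 0 < μ (n+1) / t (n+1) := by positivity
  -- tail quadratic bound at n+1
  have hTQ : (∑ k ∈ Finset.Ioc (n+1) N, μ k / t k ^ 2) ≤ (1/9) * (μ (n+1) / t (n+1) ^ 2) := by
    rw [← Finset.Icc_add_one_left_eq_Ioc]
    have h1 := hQ (N - (n+2)) (n+2) (by omega) (by omega)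
    have hd := hdec (n+1) (Finset.mem_Icc.mpr ⟨by omega, by omega⟩)
    simp only [show n+1+1 = n+2 from rfl] at hd ⊢
    have hp1 : 0 < μ (n+1) / t (n+1) ^ 2 := by positivity
    have h2 : th * (μ (n+1) / t (n+1) ^ 2) ≤ (1/10) * (μ (n+1) / t (n+1) ^ 2) :=
      mul_le_mul_of_nonneg_right hth2.le hp1.le
    linarith
  -- splitting off the first term of P n
  have hPact : ∑ k ∈ Finset.Ioc n N, μ k / (t k - s n)
      = μ (n+1) / (t (n+1) - s n) + ∑ k ∈ Finset.Ioc (n+1) N, μ k / (t k - s n) := by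
    rw [← Finset.Icc_add_one_left_eq_Ioc, ← Finset.Ioc_insert_left (by omega : n+1 ≤ N),
      Finset.sum_insert (by simp)]
  -- key decrement bound : P (n+1) + 0.8 g ≤ P n
  have hE4 : (∑ k ∈ Finset.Ioc (n+1) N, μ k / (t k - s (n+1))) + (80/100) * (μ (n+1) / t (n+1))
      ≤ ∑ k ∈ Finset.Ioc n N, μ k / (t k - s n) := by
    have hterm : ∀ k ∈ Finset.Ioc (n+1) N,
        μ k / (t k - s (n+1)) ≤ μ k / (t k - s n) + (112/100) * t (n+1) * (μ k / t k ^ 2) := by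
      intro k hk
      rw [Finset.mem_Ioc] at hk
      have htk := htpos k (by omega) hk.2
      have hμk := hμposN k (by omega) hk.2
      have ha := hden n hn (by omega) k (by omega) hk.2
      have hb := hden (n+1) (by omega) hN k (by omega) hk.2
      have hsn1loc := hsloc (n+1) (by omega) hN
      have htnn1 : t (n+1) ≤ (111/100) * t (n+1) := by linarith
      have hsnpos := hspos n hn (by omega)
      have hab : (t k - s n) - (t k - s (n+1)) ≤ (111/100) * t (n+1) := by
        have := tmono (n+1) (n+1) (by omega) le_rfl (by omega)
        linarith
      exact stmt3aux1 _ _ _ _ _ hμk htk htn1 ha hb hab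
    have hsum := Finset.sum_le_sum hterm
    rw [Finset.sum_add_distrib, ← Finset.mul_sum] at hsum
    have h3 : (112/100) * t (n+1) * (∑ k ∈ Finset.Ioc (n+1) N, μ k / t k ^ 2)
        ≤ (112/100) * t (n+1) * ((1/9) * (μ (n+1) / t (n+1) ^ 2)) :=
      mul_le_mul_of_nonneg_left hTQ (by positivity)
    have h4 : (112/100) * t (n+1) * ((1/9) * (μ (n+1) / t (n+1) ^ 2))
        = (112/900) * (μ (n+1) / t (n+1)) := by
      field_simp
      ring
    have h5 : μ (n+1) / t (n+1) ≤ μ (n+1) / (t (n+1) - s n) := by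
      have hs2 : s n < t (n+1) := (hintm n hn (by omega)).2
      have hsp := hspos n hn (by omega)
      exact div_le_div_of_nonneg_left hμn1.le (by linarith) (by linarith)
    rw [hPact]
    rw [h4] at h3
    linarith
  -- general : μ m / t m < (1/10) (μ (m+1) / t (m+1))
  have hmut : ∀ m, 1 ≤ m → m + 1 ≤ N → μ m / t m < (1/10) * (μ (m+1) / t (m+1)) := by
    intro m h1 h2
    have htm := htpos m h1 (by omega)
    have htm1 := htpos (m+1) (by omega) h2
    have hμm := hμposN m h1 (by omega)
    have hμm1 := hμposN (m+1) (by omega) h2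
    have hg := hgrow m (Finset.mem_Icc.mpr ⟨h1, by omega⟩)
    have h10 : 10 * (t (m+1) * μ m) < μ (m+1) * t m := by
      have e1 : kap * (t (m+1)/t m) * (t m * μ m) < (μ (m+1)/μ m) * (t m * μ m) :=
        mul_lt_mul_of_pos_right hg (by positivity)
      have e2 : kap * (t (m+1)/t m) * (t m * μ m) = kap * (t (m+1) * μ m) := by
        field_simp
      have e3 : (μ (m+1)/μ m) * (t m * μ m) = μ (m+1) * t m := by
        field_simp
      have h4 : 0 < t (m+1) * μ m := by positivity
      rw [e2, e3] at e1
      have h5 : 10 * (t (m+1) * μ m) < kap * (t (m+1) * μ m) :=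
        mul_lt_mul_of_pos_right hkap h4
      linarith
    have e : (1/10) * (μ (m+1) / t (m+1)) = μ (m+1) / (10 * t (m+1)) := by
      have hne : t (m+1) ≠ 0 := htm1.ne'
      field_simp
    rw [e, div_lt_div_iff₀ htm (by positivity)]
    linarith
  -- P n ≥ g
  have hPng : μ (n+1) / t (n+1) ≤ ∑ k ∈ Finset.Ioc n N, μ k / (t k - s n) := by
    have hs2 : s n < t (n+1) := (hintm n hn (by omega)).2
    have hsp := hspos n hn (by omega)
    have h5 : μ (n+1) / t (n+1) ≤ μ (n+1) / (t (n+1) - s n) :=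
      div_le_div_of_nonneg_left hμn1.le (by linarith) (by linarith)
    exact le_trans h5 (hPsingle n hn (by omega))
  -- the junk bound and E5
  obtain ⟨p, rfl⟩ : ∃ p, n = p + 1 := ⟨n - 1, by omega⟩
  have hjunk : (∑ k ∈ Finset.Ioc 0 p, μ k / (s (p+1) - t k))
      ≤ (1/100) * (μ (p+2) / t (p+2)) := by
    rcases Nat.eq_zero_or_pos p with hp0 | hp1
    · subst hp0
      simp only [Finset.Ioc_self, Finset.sum_empty]
      positivity
    · -- each term ≤ μ k / (s n - t p)
      have hd1 : (999/1000) * t (p+1) ≤ s (p+1) - t p := by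
        have hg := tgap p (p+1) hp1 (by omega) (by omega)
        have htp := htpos p hp1 (by omega)
        have h3 : 1000 * t p < t (p+1) := by
          have := mul_lt_mul_of_pos_right hlam htp
          linarith
        have := (hintm (p+1) (by omega) (by omega)).1
        linarith
      have htp1pos : 0 < t (p+1) := htpos (p+1) (by omega) (by omega)
      have hup : (∑ k ∈ Finset.Ioc 0 p, μ k / (s (p+1) - t k))
          ≤ (∑ k ∈ Finset.Ioc 0 p, μ k) / (s (p+1) - t p) := by
        rw [Finset.sum_div]
        apply Finset.sum_le_sum
        intro k hk
        rw [Finset.mem_Ioc] at hk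
        have h3 : t k ≤ t p := tmono k p (by omega) hk.2 (by omega)
        have h4 : t k < s (p+1) := hts (p+1) (by omega) (by omega) k (by omega) (by omega)
        exact div_le_div_of_nonneg_left (hμposN k (by omega) (by omega)).le
          (by linarith) (by linarith)
      have hBp := hB p hp1 (by omega)
      have hμp := hμposN p hp1 (by omega)
      have hmsp := hmustep p hp1 (by omega)
      have hμp1 := hμposN (p+1) (by omega) (by omega)
      have hup2 : (∑ k ∈ Finset.Ioc 0 p, μ k) / (s (p+1) - t p)
          ≤ ((10000/9999) * μ p) / ((999/1000) * t (p+1)) :=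
        div_le_div₀ (by positivity) hBp (by positivity) hd1
      have hup3 : ((10000/9999) * μ p) / ((999/1000) * t (p+1))
          ≤ ((10000/9999) * ((1/10000) * μ (p+1))) / ((999/1000) * t (p+1)) := by
        apply div_le_div_of_nonneg_right ?_ (by positivity)
        linarith
      have e2 : ((10000/9999) * ((1/10000) * μ (p+1))) / ((999/1000) * t (p+1))
          = (1000000/9989001000) * (μ (p+1) / t (p+1)) := by
        have hne : t (p+1) ≠ 0 := htp1pos.ne'
        field_simp
        ring
      have hmm := hmut (p+1) (by omega) (by omega)
      have hgg : 0 < μ (p+2) / t (p+2) := by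
        have := htpos (p+2) (by omega) (by omega)
        have := hμposN (p+2) (by omega) (by omega)
        positivity
      have hmp : 0 < μ (p+1) / t (p+1) := by positivity
      simp only [show p+1+1 = p+2 from rfl] at hmm
      calc (∑ k ∈ Finset.Ioc 0 p, μ k / (s (p+1) - t k))
          ≤ (1000000/9989001000) * (μ (p+1) / t (p+1)) := by
            rw [← e2]; linarith
        _ ≤ (1/100) * (μ (p+2) / t (p+2)) := by nlinarith
  -- restatements with p+2 notation (definitional)
  have hPng2 : μ (p+2) / t (p+2) ≤ ∑ k ∈ Finset.Ioc (p+1) N, μ k / (t k - s (p+1)) := hPng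
  have hg2 : 0 < μ (p+2) / t (p+2) := hg0
  have hμp1 := hμposN (p+1) (by omega) (by omega)
  have hμp2 := hμposN (p+2) (by omega) (by omega)
  have htp2 := htpos (p+2) (by omega) (by omega)
  -- ===== E5 : lower bound for μ n * S n =====
  have hAPn := hAP (p+1) (by omega) (by omega)
  have hAsplit : (∑ k ∈ Finset.Ioc 0 (p+1), μ k / (s (p+1) - t k))
      = (∑ k ∈ Finset.Ioc 0 p, μ k / (s (p+1) - t k)) + μ (p+1) / (s (p+1) - t (p+1)) :=
    Finset.sum_Ioc_succ_top (Nat.zero_le p) _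
  have hlow : (∑ k ∈ Finset.Ioc (p+1) N, μ k / (t k - s (p+1)))
      - (1/100) * (μ (p+2) / t (p+2)) ≤ μ (p+1) / (s (p+1) - t (p+1)) := by
    linarith [hjunk, hAPn, hAsplit]
  have hE5 : ((∑ k ∈ Finset.Ioc (p+1) N, μ k / (t k - s (p+1)))
        - (1/100) * (μ (p+2) / t (p+2)))^2
      ≤ μ (p+1) * (∑ k ∈ Finset.Icc 1 N, μ k / (t k - s (p+1)) ^ 2) := by
    have h1 : μ (p+1) / (t (p+1) - s (p+1))^2
        ≤ ∑ k ∈ Finset.Icc 1 N, μ k / (t k - s (p+1))^2 := by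
      apply Finset.single_le_sum (f := fun k => μ k / (t k - s (p+1))^2)
      · intro k hk
        rw [Finset.mem_Icc] at hk
        exact div_nonneg (hμposN k hk.1 hk.2).le (sq_nonneg _)
      · rw [Finset.mem_Icc]; omega
    have h4 : 0 ≤ (∑ k ∈ Finset.Ioc (p+1) N, μ k / (t k - s (p+1)))
        - (1/100) * (μ (p+2) / t (p+2)) := by linarith
    have h5 := pow_le_pow_left₀ h4 hlow 2
    have h6 : (μ (p+1) / (s (p+1) - t (p+1)))^2
        = μ (p+1) * (μ (p+1) / (s (p+1) - t (p+1))^2) := by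
      rw [div_pow, pow_two, mul_div_assoc]
    have e2 : (t (p+1) - s (p+1))^2 = (s (p+1) - t (p+1))^2 := by ring
    have h7 : μ (p+1) * (μ (p+1) / (t (p+1) - s (p+1))^2)
        ≤ μ (p+1) * (∑ k ∈ Finset.Icc 1 N, μ k / (t k - s (p+1))^2) :=
      mul_le_mul_of_nonneg_left h1 hμp1.le
    rw [e2] at h7
    linarith [h5, h7, h6.le, h6.ge]
  -- ===== E6 : upper bound for μ (n+1) * S (n+1) =====
  have hsplitS : (∑ k ∈ Finset.Icc 1 N, μ k / (t k - s (p+2))^2)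
      = ((∑ k ∈ Finset.Ioc 0 (p+1), μ k / (t k - s (p+2))^2)
        + μ (p+2) / (t (p+2) - s (p+2))^2)
        + ∑ k ∈ Finset.Ioc (p+2) N, μ k / (t k - s (p+2))^2 := by
    rw [show (1:ℕ) = 0+1 from rfl, Finset.Icc_add_one_left_eq_Ioc,
      ← Finset.sum_Ioc_consecutive _ (Nat.zero_le (p+2)) (by omega : p+2 ≤ N),
      Finset.sum_Ioc_succ_top (Nat.zero_le (p+1))]
  have hLB : (∑ k ∈ Finset.Ioc 0 (p+1), μ k / (t k - s (p+2))^2)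
      ≤ (1006/1000) * (μ (p+1) / t (p+2)^2) := by
    have hL1 : (∑ k ∈ Finset.Ioc 0 (p+1), μ k / (t k - s (p+2))^2)
        ≤ ∑ k ∈ Finset.Ioc 0 (p+1), (1005/1000) * (μ k / t (p+2)^2) := by
      apply Finset.sum_le_sum
      intro k hk
      rw [Finset.mem_Ioc] at hk
      have hμk := hμposN k (by omega) (by omega)
      have hmono : t k ≤ t (p+1) := tmono k (p+1) (by omega) hk.2 (by omega)
      have hgap : 1000 * t (p+1) < t (p+2) := by
        have h1 := tgap (p+1) (p+2) (by omega) (by omega) (by omega)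
        have h2 := htpos (p+1) (by omega) (by omega)
        have := mul_lt_mul_of_pos_right hlam h2
        linarith
      have hside : t (p+2) < s (p+2) := (hintm (p+2) (by omega) (by omega)).1
      have ha : (998/1000) * t (p+2) ≤ s (p+2) - t k := by linarith
      have e2 : (t k - s (p+2))^2 = (s (p+2) - t k)^2 := by ring
      rw [e2]
      exact stmt3aux2 _ _ _ hμk htp2 ha
    have hL2 : ∑ k ∈ Finset.Ioc 0 (p+1), (1005/1000) * (μ k / t (p+2)^2)
        = (1005/1000) * ((∑ k ∈ Finset.Ioc 0 (p+1), μ k) / t (p+2)^2) := by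
      rw [Finset.sum_div, Finset.mul_sum]
    have hBp1 := hB (p+1) (by omega) (by omega)
    have hL3 : (∑ k ∈ Finset.Ioc 0 (p+1), μ k) / t (p+2)^2
        ≤ ((10000/9999) * μ (p+1)) / t (p+2)^2 :=
      div_le_div_of_nonneg_right hBp1 (by positivity)
    have e3 : (1005/1000) * (((10000/9999) * μ (p+1)) / t (p+2)^2)
        = (1005/1000) * (10000/9999) * (μ (p+1) / t (p+2)^2) := by ring
    have hX : 0 < μ (p+1) / t (p+2)^2 := by positivity
    rw [hL2] at hL1
    nlinarith [hL1, hL3, hX]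
  have hRB : (∑ k ∈ Finset.Ioc (p+2) N, μ k / (t k - s (p+2))^2)
      ≤ (1005/1000) * ((1/9) * (μ (p+2) / t (p+2)^2)) := by
    have hTQ2 : (∑ k ∈ Finset.Ioc (p+2) N, μ k / t k ^ 2)
        ≤ (1/9) * (μ (p+2) / t (p+2) ^ 2) := hTQ
    have hR1 : (∑ k ∈ Finset.Ioc (p+2) N, μ k / (t k - s (p+2))^2)
        ≤ ∑ k ∈ Finset.Ioc (p+2) N, (1005/1000) * (μ k / t k ^ 2) := by
      apply Finset.sum_le_sum
      intro k hk
      rw [Finset.mem_Ioc] at hk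
      have hμk := hμposN k (by omega) hk.2
      have htk := htpos k (by omega) hk.2
      have ha := hden (p+2) (by omega) (by omega) k (by omega) hk.2
      exact stmt3aux2 _ _ _ hμk htk ha
    rw [← Finset.mul_sum] at hR1
    have := mul_le_mul_of_nonneg_left hTQ2 (by norm_num : (0:ℝ) ≤ 1005/1000)
    linarith
  have hMid : μ (p+2) * (μ (p+2) / (t (p+2) - s (p+2))^2)
      ≤ (∑ k ∈ Finset.Ioc (p+2) N, μ k / (t k - s (p+2)))^2 := by
    have hA1 : μ (p+2) / (s (p+2) - t (p+2))
        ≤ ∑ k ∈ Finset.Ioc 0 (p+2), μ k / (s (p+2) - t k) := by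
      apply Finset.single_le_sum (f := fun k => μ k / (s (p+2) - t k))
      · intro k hk
        exact (hAterm (p+2) (by omega) (by omega) k hk).le
      · rw [Finset.mem_Ioc]; omega
    have hAP2 := hAP (p+2) (by omega) (by omega)
    rw [hAP2] at hA1
    have hside : t (p+2) < s (p+2) := (hintm (p+2) (by omega) (by omega)).1
    have hqpos : 0 ≤ μ (p+2) / (s (p+2) - t (p+2)) :=
      (div_pos hμp2 (by linarith)).le
    have h5 := pow_le_pow_left₀ hqpos hA1 2
    have e : (μ (p+2) / (s (p+2) - t (p+2)))^2
        = μ (p+2) * (μ (p+2) / (s (p+2) - t (p+2))^2) := by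
      rw [div_pow, pow_two, mul_div_assoc]
    have e2 : (t (p+2) - s (p+2))^2 = (s (p+2) - t (p+2))^2 := by ring
    rw [e2]
    linarith [h5, e.le, e.ge]
  have hE6 : μ (p+2) * (∑ k ∈ Finset.Icc 1 N, μ k / (t k - s (p+2))^2)
      ≤ (∑ k ∈ Finset.Ioc (p+2) N, μ k / (t k - s (p+2)))^2
        + (3/10) * (μ (p+2) / t (p+2))^2 := by
    rw [hsplitS, mul_add, mul_add]
    have hmsp1 := hmustep (p+1) (by omega) (by omega)
    have h44 := stmt3aux4 _ _ _ _ _ hμp1 hμp2 htp2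
      (by exact_mod_cast hmsp1) hLB hRB
    linarith [hMid, h44]
  -- ===== conclusion =====
  have hE4' : (∑ k ∈ Finset.Ioc (p+2) N, μ k / (t k - s (p+2)))
      + (80/100) * (μ (p+2) / t (p+2))
      ≤ ∑ k ∈ Finset.Ioc (p+1) N, μ k / (t k - s (p+1)) := hE4
  have hQ0 : 0 ≤ ∑ k ∈ Finset.Ioc (p+2) N, μ k / (t k - s (p+2)) :=
    Finset.sum_nonneg fun k hk => (hPterm (p+2) (by omega) (by omega) k hk).le
  have hSnpos : 0 < ∑ k ∈ Finset.Icc 1 N, μ k / (t k - s (p+1))^2 := by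
    have h1 : μ (p+1) / (t (p+1) - s (p+1))^2
        ≤ ∑ k ∈ Finset.Icc 1 N, μ k / (t k - s (p+1))^2 := by
      apply Finset.single_le_sum (f := fun k => μ k / (t k - s (p+1))^2)
      · intro k hk
        rw [Finset.mem_Icc] at hk
        exact div_nonneg (hμposN k hk.1 hk.2).le (sq_nonneg _)
      · rw [Finset.mem_Icc]; omega
    have hside : t (p+1) < s (p+1) := (hintm (p+1) (by omega) (by omega)).1
    have h2 : 0 < μ (p+1) / (t (p+1) - s (p+1))^2 := by
      apply div_pos hμp1
      have : t (p+1) - s (p+1) ≠ 0 := by linarith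
      positivity
    linarith
  have hSn1pos : 0 < ∑ k ∈ Finset.Icc 1 N, μ k / (t k - s (p+2))^2 := by
    have h1 : μ (p+2) / (t (p+2) - s (p+2))^2
        ≤ ∑ k ∈ Finset.Icc 1 N, μ k / (t k - s (p+2))^2 := by
      apply Finset.single_le_sum (f := fun k => μ k / (t k - s (p+2))^2)
      · intro k hk
        rw [Finset.mem_Icc] at hk
        exact div_nonneg (hμposN k hk.1 hk.2).le (sq_nonneg _)
      · rw [Finset.mem_Icc]; omega
    have hside : t (p+2) < s (p+2) := (hintm (p+2) (by omega) (by omega)).1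
    have h2 : 0 < μ (p+2) / (t (p+2) - s (p+2))^2 := by
      apply div_pos hμp2
      have : t (p+2) - s (p+2) ≠ 0 := by linarith
      positivity
    linarith
  have hmain : μ (p+2) * (∑ k ∈ Finset.Icc 1 N, μ k / (t k - s (p+2))^2)
      < μ (p+1) * (∑ k ∈ Finset.Icc 1 N, μ k / (t k - s (p+1))^2) := by
    have := stmt3aux3
      (∑ k ∈ Finset.Ioc (p+1) N, μ k / (t k - s (p+1)))
      (∑ k ∈ Finset.Ioc (p+2) N, μ k / (t k - s (p+2)))
      (μ (p+2) / t (p+2))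
      (μ (p+2) * (∑ k ∈ Finset.Icc 1 N, μ k / (t k - s (p+2))^2))
      (μ (p+1) * (∑ k ∈ Finset.Icc 1 N, μ k / (t k - s (p+1))^2))
      hg2 hPng2 hQ0 hE4' hE6 hE5
    exact this
  show μ (p+2) / μ (p+1) < w (p+2) / w (p+1)
  have hw1 := hw (p+1) (Finset.mem_Icc.mpr ⟨by omega, by omega⟩)
  have hw2 := hw (p+2) (Finset.mem_Icc.mpr ⟨by omega, by omega⟩)
  rw [hw1, hw2]
  have einv : (∑ k ∈ Finset.Icc 1 N, μ k / (t k - s (p+2))^2)⁻¹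
      / (∑ k ∈ Finset.Icc 1 N, μ k / (t k - s (p+1))^2)⁻¹
      = (∑ k ∈ Finset.Icc 1 N, μ k / (t k - s (p+1))^2)
      / (∑ k ∈ Finset.Icc 1 N, μ k / (t k - s (p+2))^2) := by
    rw [div_eq_mul_inv, inv_inv, mul_comm, ← div_eq_mul_inv]
  rw [einv, div_lt_div_iff₀ hμp1 hSn1pos]
  linarith [hmain]
end

section
/- Let μ^{(k)} = Σ_n μ_n^{(k)} δ_{t_n^{(k)}} denote the spectral data after k steps of the Stieltjes algorithm (μ^{(0)} = μ). Suppose that for 0 ≤ k ≤ K one has μ_{n+1}^{(k)}/μ_n^{(k)} > κ̂ · t_{n+1}^{(k)}/t_n^{(k)} for some κ̂ > 5 and all admissible n. Then for each n, t_n^{(K+1)}/t_n^{(0)} < 1 + 2/κ̂. Moreover, at each step 0 ≤ p ≤ K one has t_n^{(p+1)}/t_n^{(p)} < 1 + (κ̂ - 1)^{-(N-p-n)}. -/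
set_option maxHeartbeats 1000000

lemma aux_pow_sub_one' (κ : ℝ) (hκ : 1 ≤ κ) : ∀ d : ℕ, 1 ≤ d → (κ - 1) ^ d ≤ κ ^ d - 1 := by
  intro d hd
  induction d with
  | zero => omega
  | succ d ih =>
    rcases Nat.eq_or_lt_of_le hd with h | h
    · simp [← h]
    · have hd1 : 1 ≤ d := by omega
      have h1 := ih hd1
      have h2 : (0:ℝ) ≤ (κ-1)^d := pow_nonneg (by linarith) d
      have h3 : (1:ℝ) ≤ κ ^ d := one_le_pow₀ hκ
      calc (κ-1)^(d+1) = (κ-1)^d * (κ-1) := by ring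
        _ ≤ (κ^d - 1) * (κ - 1) := by nlinarith
        _ ≤ κ^(d+1) - 1 := by rw [pow_succ]; nlinarith

lemma aux_key (a x : ℝ) (ha : 4 ≤ a) (hx : 4 ≤ x) :
    (1 + 2/(x*a)) * (1 + x⁻¹) ≤ 1 + 2 / x := by
  have hx0 : (0:ℝ) < x := by linarith
  have ha0 : (0:ℝ) < a := by linarith
  rw [← sub_nonneg]
  have heq : 1 + 2/x - (1 + 2/(x*a)) * (1 + x⁻¹) = (x*a - 2*x - 2)/(x^2*a) := by
    field_simp; ring
  rw [heq]
  apply div_nonneg _ (by positivity)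
  nlinarith

lemma aux_tail (a : ℝ) (ha : 4 ≤ a) : ∀ L : ℕ, ∀ j : ℕ, 1 ≤ j →
    ∏ p ∈ Finset.range L, (1 + (a ^ (j + p))⁻¹) ≤ 1 + 2 / a ^ j := by
  intro L
  induction L with
  | zero => intro j hj; simp; positivity
  | succ L ih =>
    intro j hj
    rw [Finset.prod_range_succ']
    have hre : ∀ p ∈ Finset.range L, (1 + (a ^ (j + (p+1)))⁻¹) = (1 + (a ^ ((j+1) + p))⁻¹) := by
      intro p _; rw [show j + (p+1) = (j+1)+p by omega]
    rw [Finset.prod_congr rfl hre]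
    have h1 := ih (j+1) (by omega)
    have hx : (4:ℝ) ≤ a ^ j := by
      calc (4:ℝ) ≤ a := ha
        _ = a ^ 1 := (pow_one a).symm
        _ ≤ a ^ j := pow_le_pow_right₀ (by linarith) hj
    have hxpos : (0:ℝ) < a ^ j := by linarith
    calc (∏ p ∈ Finset.range L, (1 + (a ^ ((j+1) + p))⁻¹)) * (1 + (a ^ (j + 0))⁻¹)
        ≤ (1 + 2 / a ^ (j+1)) * (1 + (a ^ (j + 0))⁻¹) := by
          apply mul_le_mul_of_nonneg_right h1 (by positivity)
      _ ≤ 1 + 2 / a ^ j := by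
          rw [add_zero, show a^(j+1) = a^j * a by ring]
          exact aux_key a (a^j) ha hx

lemma aux_prod (a : ℝ) (ha : 4 < a) : ∀ L : ℕ, ∀ j : ℕ, 1 ≤ j →
    ∏ p ∈ Finset.range L, (1 + (a ^ (j + p))⁻¹) < 1 + 2 / (a + 1) := by
  have ha0 : (0:ℝ) < a := by linarith
  have hpow : ∀ j : ℕ, 1 ≤ j → (4:ℝ) ≤ a ^ j ∧ a ≤ a ^ j := by
    intro j hj
    have : a = a ^ 1 := (pow_one a).symm
    constructor
    · calc (4:ℝ) ≤ a := le_of_lt ha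
        _ = a ^ 1 := (pow_one a).symm
        _ ≤ a ^ j := pow_le_pow_right₀ (by linarith) hj
    · calc a = a ^ 1 := (pow_one a).symm
        _ ≤ a ^ j := pow_le_pow_right₀ (by linarith) hj
  intro L
  match L with
  | 0 => intro j hj; simp; positivity
  | 1 =>
    intro j hj
    simp only [Finset.prod_range_one, add_zero]
    obtain ⟨h4, haj⟩ := hpow j hj
    have h1 : (a ^ j)⁻¹ ≤ a⁻¹ := by
      apply inv_anti₀ ha0 haj
    have : a⁻¹ < 2/(a+1) := by
      rw [inv_eq_one_div, div_lt_div_iff₀ (by linarith) (by linarith)]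
      linarith
    linarith [h1]
  | (L+2) =>
    intro j hj
    rw [Finset.prod_range_succ', Finset.prod_range_succ']
    have hre : ∀ p ∈ Finset.range L, (1 + (a ^ (j + (p+1+1)))⁻¹) = (1 + (a ^ ((j+2) + p))⁻¹) := by
      intro p _; rw [show j + (p+1+1) = (j+2)+p by omega]
    rw [Finset.prod_congr rfl hre]
    have htail := aux_tail a (le_of_lt ha) L (j+2) (by omega)
    obtain ⟨h4, haj⟩ := hpow j hj
    obtain ⟨h4', haj'⟩ := hpow (j+1) (by omega)
    obtain ⟨h4'', haj''⟩ := hpow (j+2) (by omega)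
    have e1 : (1 + (a ^ j)⁻¹) ≤ 1 + a⁻¹ := by
      have := inv_anti₀ ha0 haj; linarith
    have e2 : (1 + (a ^ (j+1))⁻¹) ≤ 1 + (a^2)⁻¹ := by
      have h : a^2 ≤ a^(j+1) := pow_le_pow_right₀ (by linarith) (by omega)
      have := inv_anti₀ (by positivity) h; linarith
    have e3 : (∏ p ∈ Finset.range L, (1 + (a ^ ((j+2) + p))⁻¹)) ≤ 1 + 2 * (a^3)⁻¹ := by
      have h : a^3 ≤ a^(j+2) := pow_le_pow_right₀ (by linarith) (by omega)
      have h2 := inv_anti₀ (by positivity) h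
      calc (∏ p ∈ Finset.range L, (1 + (a ^ ((j+2) + p))⁻¹)) ≤ 1 + 2/a^(j+2) := htail
        _ ≤ 1 + 2 * (a^3)⁻¹ := by rw [div_eq_mul_inv]; linarith
    have pos1 : (0:ℝ) < 1 + (a^j)⁻¹ := by positivity
    have pos2 : (0:ℝ) < 1 + (a^(j+1))⁻¹ := by positivity
    have pos3 : (0:ℝ) ≤ ∏ p ∈ Finset.range L, (1 + (a ^ ((j+2) + p))⁻¹) := by
      apply Finset.prod_nonneg; intro p _; positivity
    have final : (1 + 2*(a^3)⁻¹) * (1 + (a^2)⁻¹) * (1 + a⁻¹) < 1 + 2/(a+1) := by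
      rw [← sub_pos]
      have heq : 1 + 2/(a+1) - (1 + 2*(a^3)⁻¹) * (1 + (a^2)⁻¹) * (1 + a⁻¹)
          = (a^6 - (2*a^5 + 4*a^4 + 5*a^3 + 4*a^2 + 4*a + 2)) / (a^6*(a+1)) := by
        field_simp; ring
      rw [heq]
      apply div_pos _ (by positivity)
      nlinarith [sq_nonneg a, sq_nonneg (a-4), pow_pos ha0 3, pow_pos ha0 4, pow_pos ha0 5]
    calc (∏ p ∈ Finset.range L, (1 + (a ^ ((j+2) + p))⁻¹)) * (1 + (a ^ (j + 1 + 0))⁻¹) * (1 + (a ^ (j + 0))⁻¹)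
        ≤ (1 + 2*(a^3)⁻¹) * (1 + (a^2)⁻¹) * (1 + a⁻¹) := by
          apply mul_le_mul _ e1 (by positivity) (by positivity)
          apply mul_le_mul _ _ (by positivity) (by positivity)
          · simpa using e3
          · simpa using e2
      _ < 1 + 2/(a+1) := final
set_option maxHeartbeats 2000000 in
lemma aux_step (M : ℕ) (κ lam : ℝ) (hκ : 5 < κ) (hlam : 1000 < lam)
    (f τ : ℕ → ℝ) (s : ℝ) (m : ℕ) (hm1 : 1 ≤ m) (hmM : m + 1 ≤ M)
    (hf : ∀ i ∈ Finset.Icc 1 M, 0 < f i)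
    (hτ : ∀ i ∈ Finset.Icc 1 M, 0 < τ i)
    (hl : ∀ i ∈ Finset.Icc 1 (M-1), lam * τ i < τ (i+1))
    (hg : ∀ i ∈ Finset.Icc 1 (M-1), κ * (τ (i+1) / τ i) < f (i+1) / f i)
    (hs1 : τ m < s) (hs2 : s < τ (m+1))
    (hroot : ∑ i ∈ Finset.Icc 1 M, f i / (τ i - s) = 0) :
    s / τ m < 1 + ((κ - 1) ^ (M - m))⁻¹ := by
  have hmem : ∀ i, 1 ≤ i → i ≤ M → i ∈ Finset.Icc 1 M := by
    intro i h1 h2; simp only [Finset.mem_Icc]; omega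
  have hmem' : ∀ i, 1 ≤ i → i + 1 ≤ M → i ∈ Finset.Icc 1 (M-1) := by
    intro i h1 h2; simp only [Finset.mem_Icc]; omega
  have hτm : 0 < τ m := hτ m (hmem m hm1 (by omega))
  have hfm : 0 < f m := hf m (hmem m hm1 (by omega))
  -- step comparisons
  have hfstep : ∀ i, 1 ≤ i → i + 1 ≤ M → 5000 * f i < f (i+1) := by
    intro i h1 h2
    have hfi := hf i (hmem i h1 (by omega))
    have hfi1 := hf (i+1) (hmem (i+1) (by omega) h2)
    have hτi := hτ i (hmem i h1 (by omega))
    have hτi1 := hτ (i+1) (hmem (i+1) (by omega) h2)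
    have hgi := hg i (hmem' i h1 h2)
    have hli := hl i (hmem' i h1 h2)
    have hr : (1000:ℝ) < τ (i+1) / τ i := by
      rw [lt_div_iff₀ hτi]
      calc (1000:ℝ) * τ i < lam * τ i := by nlinarith
        _ < τ (i+1) := hli
    have h5 : (5000:ℝ) < f (i+1) / f i := by
      calc (5000:ℝ) = 5 * 1000 := by norm_num
        _ < κ * (τ (i+1) / τ i) := by nlinarith
        _ < f (i+1) / f i := hgi
    rw [lt_div_iff₀ hfi] at h5; linarith
  have hτstep : ∀ i, 1 ≤ i → i + 1 ≤ M → τ i < τ (i+1) := by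
    intro i h1 h2
    have hτi := hτ i (hmem i h1 (by omega))
    have hli := hl i (hmem' i h1 h2)
    nlinarith
  -- monotonicity of τ
  have hmono : ∀ i j, 1 ≤ i → i ≤ j → j ≤ M → τ i ≤ τ j := by
    intro i j h1 hij
    induction j, hij using Nat.le_induction with
    | base => intro _; exact le_rfl
    | succ j hij ih =>
      intro hjM
      have := hτstep j (by omega) hjM
      have := ih (by omega)
      linarith
  -- geometric sum bound on weights
  have hS : ∀ p, 1 ≤ p → p ≤ M → ∑ i ∈ Finset.Icc 1 p, f i ≤ (5000/4999) * f p := by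
    intro p h1
    induction p, h1 using Nat.le_induction with
    | base =>
      intro _
      rw [Finset.Icc_self, Finset.sum_singleton]
      have := hf 1 (hmem 1 le_rfl (by omega)); linarith
    | succ p hp1 ih =>
      intro hp
      have hpM : p ≤ M := by omega
      have h2 := ih hpM
      rw [Finset.sum_Icc_succ_top (by omega)]
      have h3 := hfstep p hp1 hp
      have hfp := hf p (hmem p hp1 hpM)
      linarith
  -- growth of f i / τ i
  have hgrowpow : ∀ j, m + j ≤ M → κ ^ j * (f m / τ m) ≤ f (m+j) / τ (m+j) := by
    intro j
    induction j with
    | zero => intro _; simp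
    | succ j ih =>
      intro hjM
      have hij := ih (by omega)
      set i := m + j with hi
      have h1i : 1 ≤ i := by omega
      have hfi := hf i (hmem i h1i (by omega))
      have hτi := hτ i (hmem i h1i (by omega))
      have hτi1 := hτ (i+1) (hmem (i+1) (by omega) (by omega))
      have hgi := hg i (hmem' i h1i (by omega))
      have key : κ * (f i / τ i) ≤ f (i+1) / τ (i+1) := by
        rw [le_div_iff₀ hτi1]
        have h4 : κ * (τ (i+1) / τ i) * f i < f (i+1) := by
          have := (lt_div_iff₀ hfi).mp hgi; linarith
        calc κ * (f i / τ i) * τ (i+1) = κ * (τ (i+1) / τ i) * f i := by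
              field_simp
          _ ≤ f (i+1) := le_of_lt h4
      have hκ0 : (0:ℝ) < κ := by linarith
      have hmj : m + (j+1) = i + 1 := by omega
      rw [hmj]
      calc κ ^ (j+1) * (f m / τ m) = κ * (κ ^ j * (f m / τ m)) := by ring
        _ ≤ κ * (f i / τ i) := by nlinarith
        _ ≤ f (i+1) / τ (i+1) := key
  -- split the root sum
  have hτm1 := hτ (m+1) (hmem (m+1) (by omega) hmM)
  have hsm : 0 < s - τ m := by linarith
  have hset : Finset.Icc 1 M = Finset.Icc 1 (m-1) ∪ insert m (Finset.Icc (m+1) M) := by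
    ext x; simp only [Finset.mem_Icc, Finset.mem_union, Finset.mem_insert]; omega
  have hdisj : Disjoint (Finset.Icc 1 (m-1)) (insert m (Finset.Icc (m+1) M)) := by
    rw [Finset.disjoint_left]; intro x hx hx'
    simp only [Finset.mem_Icc] at hx
    simp only [Finset.mem_insert, Finset.mem_Icc] at hx'
    omega
  have hnm : m ∉ Finset.Icc (m+1) M := by simp [Finset.mem_Icc]
  have hsplit : (∑ i ∈ Finset.Icc 1 (m-1), f i / (τ i - s))
      + (f m / (τ m - s) + ∑ i ∈ Finset.Icc (m+1) M, f i / (τ i - s)) = 0 := by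
    have h := hroot
    rw [hset, Finset.sum_union hdisj, Finset.sum_insert hnm] at h
    exact h
  have hA1 : (∑ i ∈ Finset.Icc 1 (m-1), f i / (τ i - s))
      = -(∑ i ∈ Finset.Icc 1 (m-1), f i / (s - τ i)) := by
    rw [← Finset.sum_neg_distrib]
    apply Finset.sum_congr rfl
    intro i _
    rw [show τ i - s = -(s - τ i) by ring, div_neg]
  have hfsm : f m / (τ m - s) = -(f m / (s - τ m)) := by
    rw [show τ m - s = -(s - τ m) by ring, div_neg]
  have hmain0 : f m / (s - τ m) = (∑ i ∈ Finset.Icc (m+1) M, f i / (τ i - s))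
      - (∑ i ∈ Finset.Icc 1 (m-1), f i / (s - τ i)) := by
    rw [hA1, hfsm] at hsplit; linarith
  -- bound B
  have hBlt : (∑ i ∈ Finset.Icc 1 (m-1), f i / (s - τ i)) < f m / τ m := by
    have hsum : ∑ i ∈ Finset.Icc 1 (m-1), f i ≤ f m / 4999 := by
      rcases Nat.lt_or_ge m 2 with h2 | h2
      · have he : Finset.Icc 1 (m-1) = ∅ := Finset.Icc_eq_empty (by omega)
        rw [he, Finset.sum_empty]; positivity
      · have h3 := hS (m-1) (by omega) (by omega)
        have h4 := hfstep (m-1) (by omega) (by omega)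
        rw [show m - 1 + 1 = m by omega] at h4
        have hfm1 := hf (m-1) (hmem (m-1) (by omega) (by omega))
        linarith
    have hBle : (∑ i ∈ Finset.Icc 1 (m-1), f i / (s - τ i))
        ≤ (∑ i ∈ Finset.Icc 1 (m-1), f i) / ((999/1000) * τ m) := by
      rw [Finset.sum_div]
      apply Finset.sum_le_sum
      intro i hi
      simp only [Finset.mem_Icc] at hi
      have hfi := hf i (hmem i hi.1 (by omega))
      have hτi := hτ i (hmem i hi.1 (by omega))
      have hτile : τ i ≤ τ m / 1000 := by
        have h3 : τ i ≤ τ (m-1) := hmono i (m-1) hi.1 hi.2 (by omega)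
        have h4 := hl (m-1) (hmem' (m-1) (by omega) (by omega))
        rw [show m - 1 + 1 = m by omega] at h4
        have hτm1' := hτ (m-1) (hmem (m-1) (by omega) (by omega))
        nlinarith
      have hden : (999/1000) * τ m ≤ s - τ i := by nlinarith
      exact div_le_div_of_nonneg_left (le_of_lt hfi) (by positivity) hden
    have hmid : (∑ i ∈ Finset.Icc 1 (m-1), f i) / ((999/1000) * τ m)
        ≤ (f m / 4999) / ((999/1000) * τ m) := by
      gcongr
    have hfinal : (f m / 4999) / ((999/1000) * τ m) < f m / τ m := by
      rw [div_lt_div_iff₀ (by positivity) hτm]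
      nlinarith [mul_pos hfm hτm]
    linarith
  -- bound A2 from below
  have hτM := hτ M (hmem M (by omega) le_rfl)
  have hfM := hf M (hmem M (by omega) le_rfl)
  have hsM : s < τ M := by
    have := hmono (m+1) M (by omega) hmM le_rfl
    linarith
  have hA2pos : ∀ i ∈ Finset.Icc (m+1) M, 0 ≤ f i / (τ i - s) := by
    intro i hi
    simp only [Finset.mem_Icc] at hi
    have hfi := hf i (hmem i (by omega) hi.2)
    have : τ (m+1) ≤ τ i := hmono (m+1) i (by omega) hi.1 hi.2
    have : 0 < τ i - s := by linarith
    positivity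
  have hMmem : M ∈ Finset.Icc (m+1) M := by simp [Finset.mem_Icc]; omega
  have hA2ge : f M / (τ M - s) ≤ ∑ i ∈ Finset.Icc (m+1) M, f i / (τ i - s) :=
    Finset.single_le_sum hA2pos hMmem
  have hMτ : f M / τ M ≤ f M / (τ M - s) := by
    apply div_le_div_of_nonneg_left (le_of_lt hfM) (by linarith) (by linarith)
  have hgp := hgrowpow (M - m) (by omega)
  rw [show m + (M - m) = M by omega] at hgp
  -- combine
  have hd : 1 ≤ M - m := by omega
  have hg0 : (0:ℝ) < f m / τ m := by positivity
  have hpow := aux_pow_sub_one' κ (by linarith) (M - m) hd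
  have hmain : (κ-1)^(M-m) * (f m / τ m) < f m / (s - τ m) := by
    have h1 := mul_le_mul_of_nonneg_right hpow (le_of_lt hg0)
    linarith [hgp, hA2ge, hMτ, hmain0, hBlt]
  -- conclude
  have hP : (0:ℝ) < (κ-1)^(M-m) := pow_pos (by linarith) _
  rw [show (κ-1)^(M-m) * (f m / τ m) = ((κ-1)^(M-m) * f m) / τ m by ring] at hmain
  rw [div_lt_div_iff₀ hτm hsm] at hmain
  have h3 : f m * ((κ-1)^(M-m) * (s - τ m)) < f m * τ m := by linear_combination hmain
  have h4 : (κ-1)^(M-m) * (s - τ m) < τ m := lt_of_mul_lt_mul_left h3 (le_of_lt hfm)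
  have h5 : s - τ m < τ m / (κ-1)^(M-m) := (lt_div_iff₀ hP).mpr (by linear_combination h4)
  rw [div_lt_iff₀ hτm]
  have h6 : (1 + ((κ-1)^(M-m))⁻¹) * τ m = τ m + τ m / (κ-1)^(M-m) := by
    field_simp
  linarith

set_option maxHeartbeats 1000000 in
/-- If on the first `K` steps of the Stieltjes algorithm the weights grow fast enough,
then even after the `K+1`-st step the poles change little.  Here `μ k n` and `t k n`
denote the weights and poles of the spectral data `μ^{(k)}` after `k` Stieltjes steps,
with `μ^{(0)} = μ` and `μ^{(k)}` having atoms indexed by `1 ≤ n ≤ N - k`. -/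
theorem stmt5 (N K : ℕ) (hN : K + 2 ≤ N) (lam kaph : ℝ)
    (μ t : ℕ → ℕ → ℝ)
    (hkaph : 5 < kaph) (hlam : 1000 < lam)
    (hpos : ∀ k ≤ K + 1, ∀ n ∈ Finset.Icc 1 (N - k), 0 < μ k n)
    (hnorm : ∀ k ≤ K + 1, ∑ n ∈ Finset.Icc 1 (N - k), μ k n = 1)
    (htpos : ∀ k ≤ K + 1, ∀ n ∈ Finset.Icc 1 (N - k), 0 < t k n)
    (hlac : ∀ k ≤ K + 1, ∀ n ∈ Finset.Icc 1 (N - k - 1), lam * t k n < t k (n + 1))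
    (hroot : ∀ k ≤ K, ∀ m ∈ Finset.Icc 1 (N - k - 1),
      ∑ n ∈ Finset.Icc 1 (N - k), μ k n / (t k n - t (k + 1) m) = 0)
    (hint : ∀ k ≤ K, ∀ m ∈ Finset.Icc 1 (N - k - 1),
      t k m < t (k + 1) m ∧ t (k + 1) m < t k (m + 1))
    (hweights : ∀ k ≤ K, ∃ c : ℝ, 0 < c ∧ ∀ m ∈ Finset.Icc 1 (N - k - 1),
      μ (k + 1) m = c * (∑ n ∈ Finset.Icc 1 (N - k), μ k n / (t k n - t (k + 1) m) ^ 2)⁻¹)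
    (hgrow : ∀ k ≤ K, ∀ n ∈ Finset.Icc 1 (N - k - 1),
      kaph * (t k (n + 1) / t k n) < μ k (n + 1) / μ k n) :
    (∀ n ∈ Finset.Icc 1 (N - (K + 1)), t (K + 1) n / t 0 n < 1 + 2 / kaph) ∧
    (∀ p ≤ K, ∀ n ∈ Finset.Icc 1 (N - p - 1),
      t (p + 1) n / t p n < 1 + (kaph - 1) ^ (-(((N : ℤ) - (p : ℤ) - (n : ℤ))))) := by
  have part2 : ∀ p ≤ K, ∀ n ∈ Finset.Icc 1 (N - p - 1),
      t (p + 1) n / t p n < 1 + ((kaph - 1) ^ (N - p - n))⁻¹ := by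
    intro p hp n hn
    have hn' := hn
    simp only [Finset.mem_Icc] at hn'
    have hintp := hint p hp n hn
    exact aux_step (N - p) kaph lam hkaph hlam (μ p) (t p) (t (p+1) n) n hn'.1
      (by omega) (hpos p (by omega)) (htpos p (by omega)) (hlac p (by omega))
      (hgrow p hp) hintp.1 hintp.2 (hroot p hp n hn)
  constructor
  · -- part 1
    intro n hn
    simp only [Finset.mem_Icc] at hn
    have htmem : ∀ j, j ≤ K + 1 → n ∈ Finset.Icc 1 (N - j) := by
      intro j hj; simp only [Finset.mem_Icc]; omega
    have htel : ∀ j ≤ K + 1, t j n / t 0 n ≤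
        ∏ p ∈ Finset.range j, (1 + ((kaph - 1) ^ (N - p - n))⁻¹) := by
      intro j hj
      induction j with
      | zero =>
        have ht0 : 0 < t 0 n := htpos 0 (by omega) n (htmem 0 (by omega))
        simp [div_self (ne_of_gt ht0)]
      | succ j ih =>
        have hjK : j ≤ K := by omega
        have h1 := ih (by omega)
        have h2 := part2 j hjK n (by simp only [Finset.mem_Icc]; omega)
        rw [Finset.prod_range_succ]
        have htj : 0 < t j n := htpos j (by omega) n (htmem j (by omega))
        have htj1 : 0 < t (j+1) n := htpos (j+1) (by omega) n (htmem (j+1) (by omega))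
        have ht0 : 0 < t 0 n := htpos 0 (by omega) n (htmem 0 (by omega))
        have key : t (j+1) n / t 0 n = (t j n / t 0 n) * (t (j+1) n / t j n) := by
          field_simp
        rw [key]
        have hprodnn : (0:ℝ) ≤ ∏ p ∈ Finset.range j, (1 + ((kaph - 1) ^ (N - p - n))⁻¹) := by
          apply Finset.prod_nonneg
          intro p _
          have : (0:ℝ) < (kaph - 1) ^ (N - p - n) := pow_pos (by linarith) _
          positivity
        exact mul_le_mul h1 (le_of_lt h2) (by positivity) hprodnn
    have hfin := htel (K+1) le_rfl
    have hprod : (∏ p ∈ Finset.range (K+1), (1 + ((kaph - 1) ^ (N - p - n))⁻¹))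
        < 1 + 2 / kaph := by
      have hrefl := Finset.prod_range_reflect
        (fun p => 1 + ((kaph - 1) ^ (N - p - n))⁻¹) (K+1)
      rw [← hrefl]
      have hcong : ∀ q ∈ Finset.range (K+1),
          (1 + ((kaph - 1) ^ (N - (K + 1 - 1 - q) - n))⁻¹)
          = (1 + ((kaph - 1) ^ ((N - K - n) + q))⁻¹) := by
        intro q hq
        simp only [Finset.mem_range] at hq
        rw [show N - (K + 1 - 1 - q) - n = (N - K - n) + q by omega]
      rw [Finset.prod_congr rfl hcong]
      have h := aux_prod (kaph - 1) (by linarith) (K+1) (N - K - n) (by omega)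
      rw [show kaph - 1 + 1 = kaph by ring] at h
      exact h
    exact lt_of_le_of_lt hfin hprod
  · -- part 2 with zpow
    intro p hp n hn
    have h := part2 p hp n hn
    simp only [Finset.mem_Icc] at hn
    have hd : (-(((N:ℤ) - (p:ℤ) - (n:ℤ)))) = -((N - p - n : ℕ) : ℤ) := by omega
    rw [hd, zpow_neg, zpow_natCast]
    exact h
end

section
/- Suppose z - b + Σ_{k=1}^{N-1} w_k/(s_k - z) = -(Σ_{k=1}^N μ_k/(t_k - z))^{-1} (one step of the reversed Stieltjes algorithm), where b > λ s_{N-1}, s_{n+1} > λ s_n > 0 (λ > 1000), w_{n+1}/w_n > κ s_{n+1}/s_n (κ > 10), w_{n+1}/s_{n+1}^2 < θ w_n/s_n^2 (θ < 1), and 10 θ^{-1} s_{N-1}^2 < Σ_k w_k < (1/10) κ^{-1} b s_{N-1}. Then for n < N: (1 - 2/κ) w_n/b < s_n - t_n < (1 + 2/λ + 2/κ) w_n/b, and b < t_N < (1 + 1/(λκ)) b. -/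
set_option maxHeartbeats 3200000 in
/-- Root localization for one step of the reversed Stieltjes algorithm. -/
theorem stmt10 (N : ℕ) (hN : 2 ≤ N) (lam kap th b : ℝ)
    (w s t μ : ℕ → ℝ)
    (hlam : 1000 < lam) (hkap : 10 < kap) (hth : th < 1)
    (hwpos : ∀ n ∈ Finset.Icc 1 (N - 1), 0 < w n)
    (hb : lam * s (N - 1) < b)
    (hs : ∀ n ∈ Finset.Icc 1 (N - 2), lam * s n < s (n + 1) ∧ 0 < s n)
    (hs1 : 0 < s 1)
    (hwgrow : ∀ n ∈ Finset.Icc 1 (N - 2), kap * (s (n + 1) / s n) < w (n + 1) / w n)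
    (hwdec : ∀ n ∈ Finset.Icc 1 (N - 2), w (n + 1) / s (n + 1) ^ 2 < th * (w n / s n ^ 2))
    (hsum1 : 10 * th⁻¹ * s (N - 1) ^ 2 < ∑ k ∈ Finset.Icc 1 (N - 1), w k)
    (hsum2 : ∑ k ∈ Finset.Icc 1 (N - 1), w k < 1 / 10 * kap⁻¹ * (b * s (N - 1)))
    (hroot : ∀ n ∈ Finset.Icc 1 N,
      t n - b + ∑ k ∈ Finset.Icc 1 (N - 1), w k / (s k - t n) = 0)
    (hint : ∀ n ∈ Finset.Icc 1 (N - 1), t n < s n ∧ s n < t (n + 1))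
    (hμ : ∀ n ∈ Finset.Icc 1 N,
      μ n = (1 + ∑ k ∈ Finset.Icc 1 (N - 1), w k / (s k - t n) ^ 2)⁻¹) :
    (∀ n ∈ Finset.Icc 1 (N - 1),
      (1 - 2 / kap) * (w n / b) < s n - t n ∧
      s n - t n < (1 + 2 / lam + 2 / kap) * (w n / b)) ∧
    b < t N ∧ t N < (1 + 1 / (lam * kap)) * b := by
  clear hsum1 hwdec hμ hth
  set M := N - 1 with hMdef
  have hM1 : 1 ≤ M := by omega
  have hNM : N = M + 1 := by omega
  have hN2eq : N - 2 = M - 1 := by omega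
  rw [hN2eq] at hs hwgrow
  rw [hNM] at hroot ⊢
  have hlam0 : (0:ℝ) < lam := by linarith
  have hkap0 : (0:ℝ) < kap := by linarith
  -- positivity of s
  have spos : ∀ k, 1 ≤ k → k ≤ M → 0 < s k := by
    intro k h1 h2
    rcases Nat.lt_or_ge k M with h | h
    · exact (hs k (by simp only [Finset.mem_Icc]; omega)).2
    · have hkM : k = M := by omega
      rcases Nat.lt_or_ge 1 k with h' | h'
      · have h3 := hs (k-1) (by simp only [Finset.mem_Icc]; omega)
        have hk1 : k - 1 + 1 = k := by omega
        rw [hk1] at h3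
        nlinarith [h3.1, h3.2, mul_pos hlam0 h3.2]
      · have hk1 : k = 1 := by omega
        rw [hk1]; exact hs1
  have sstep : ∀ k, 1 ≤ k → k < M → lam * s k < s (k+1) := by
    intro k h1 h2
    exact (hs k (by simp only [Finset.mem_Icc]; omega)).1
  have smono : ∀ m k, 1 ≤ m → m ≤ k → k ≤ M → s m ≤ s k := by
    intro m k h1 h2
    induction k, h2 using Nat.le_induction with
    | base => intro _; exact le_refl _
    | succ k hk ih =>
      intro h3
      have h4 : k ≤ M := by omega
      have h5 := ih h4
      have h6 := sstep k (by omega) (by omega)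
      nlinarith [spos k (by omega) h4, mul_pos (show (0:ℝ) < lam - 1 by linarith) (spos k (by omega) h4)]
  have sgap : ∀ k n, 1 ≤ k → k < n → n ≤ M → lam * s k ≤ s n := by
    intro k n h1 h2 h3
    have e1 := sstep k h1 (by omega)
    have e2 := smono (k+1) n (by omega) (by omega) h3
    linarith
  -- weight ratio growth
  have wratio : ∀ k, 1 ≤ k → k < M → kap * (w k / s k) < w (k+1) / s (k+1) := by
    intro k h1 h2
    have hg := hwgrow k (by simp only [Finset.mem_Icc]; omega)
    have hsk := spos k h1 (by omega)
    have hsk1 := spos (k+1) (by omega) (by omega)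
    have hwk := hwpos k (by simp only [Finset.mem_Icc]; omega)
    rw [mul_div_assoc'] at hg ⊢
    rw [div_lt_div_iff₀ hsk hwk] at hg
    rw [div_lt_div_iff₀ hsk hsk1]
    linarith [hg]
  -- geometric sum bound
  have sumratio : ∀ m, 1 ≤ m → m ≤ M →
      (kap - 1) * (∑ k ∈ Finset.Icc 1 m, w k / s k) ≤ kap * (w m / s m) := by
    intro m h1
    induction m, h1 using Nat.le_induction with
    | base =>
      intro _
      rw [Finset.Icc_self, Finset.sum_singleton]
      have := div_pos (hwpos 1 (by simp only [Finset.mem_Icc]; omega)) hs1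
      linarith [this]
    | succ m hm ih =>
      intro h2
      rw [Finset.sum_Icc_succ_top (show 1 ≤ m + 1 by omega)]
      have h3 := ih (by omega)
      have h4 := wratio m hm (by omega)
      have h5 : 0 < w (m+1) / s (m+1) :=
        div_pos (hwpos _ (by simp only [Finset.mem_Icc]; omega))
          (spos _ (by omega) (by omega))
      linarith [h3, h4, h5]
  set Sstar := ∑ k ∈ Finset.Icc 1 M, w k / s k with hSdef
  have ratpos : ∀ k ∈ Finset.Icc 1 M, 0 < w k / s k := by
    intro k hk
    simp only [Finset.mem_Icc] at hk
    exact div_pos (hwpos k (by simp only [Finset.mem_Icc]; omega)) (spos k hk.1 hk.2)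
  have Spos : 0 < Sstar := by
    rw [hSdef]
    exact Finset.sum_pos ratpos ⟨1, by simp only [Finset.mem_Icc]; omega⟩
  have termStar : ∀ k, 1 ≤ k → k ≤ M → w k / s k ≤ Sstar := by
    intro k h1 h2
    rw [hSdef]
    exact Finset.single_le_sum (fun i hi => (ratpos i hi).le)
      (by simp only [Finset.mem_Icc]; omega)
  have hsM : 0 < s M := spos M hM1 le_rfl
  have hbpos : 0 < b := by linarith [mul_pos hlam0 hsM]
  set W := ∑ k ∈ Finset.Icc 1 M, w k with hWdef
  have hW2 : 10 * kap * W < b * s M := by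
    have h10 : 10 * kap * W < 10 * kap * (1/10 * kap⁻¹ * (b * s M)) := by
      apply mul_lt_mul_of_pos_left hsum2
      linarith
    have h11 : 10 * kap * (1/10 * kap⁻¹ * (b * s M)) = b * s M := by
      field_simp [hkap0.ne']
    linarith
  have wM_le : w M ≤ W := by
    rw [hWdef]
    exact Finset.single_le_sum (fun i hi => (hwpos i hi).le)
      (by simp only [Finset.mem_Icc]; omega)
  have SstarB : 9 * kap * Sstar < b := by
    have h1 := sumratio M hM1 le_rfl
    rw [← hSdef] at h1
    have h2 : kap * (w M / s M) < b / 10 := by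
      rw [← mul_div_assoc, div_lt_div_iff₀ hsM (by norm_num : (0:ℝ) < 10)]
      linarith [mul_le_mul_of_nonneg_left wM_le hkap0.le, hW2]
    linarith [h1, h2, mul_nonneg (by linarith : (0:ℝ) ≤ kap - 10) Spos.le]
  have wsb : ∀ n, 1 ≤ n → n ≤ M → 9 * kap * w n ≤ b * s n := by
    intro n h1 h2
    have hsn := spos n h1 h2
    have h4 : w n ≤ Sstar * s n := (div_le_iff₀ hsn).1 (termStar n h1 h2)
    linarith [mul_lt_mul_of_pos_right SstarB hsn,
      mul_le_mul_of_nonneg_left h4 (by linarith : (0:ℝ) ≤ 9 * kap)]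
  have hcc : ∀ (a x c : ℝ), x ≠ 0 → c ≠ 0 → a / (c * x) = c⁻¹ * (a / x) := by
    intro a x c hx hc
    field_simp
  -- main bounds for interior roots
  have main : ∀ n, 1 ≤ n → n ≤ M →
      (1 - 2 / kap) * (w n / b) < s n - t n ∧
      s n - t n < (1 + 2 / lam + 2 / kap) * (w n / b) := by
    intro n h1 h2
    have hint_n := hint n (by simp only [Finset.mem_Icc]; omega)
    have htn_lt : t n < s n := hint_n.1
    have hd0 : 0 < s n - t n := by linarith
    have hsn := spos n h1 h2
    have hsnM : s n ≤ s M := smono n M h1 h2 le_rfl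
    have htnb : lam * t n < b := by
      have p1 := mul_lt_mul_of_pos_left htn_lt hlam0
      have p2 := mul_le_mul_of_nonneg_left hsnM hlam0.le
      linarith
    have esplit : ∑ k ∈ Finset.Icc 1 M, w k / (s k - t n)
        = (∑ k ∈ Finset.Icc 1 (n-1), w k / (s k - t n)) + w n / (s n - t n)
          + ∑ k ∈ Finset.Ioc n M, w k / (s k - t n) := by
      have e : ∀ m : ℕ, Finset.Icc 1 m = Finset.Ioc 0 m := fun m => by
        rw [← Finset.Icc_add_one_left_eq_Ioc]; rfl
      have ha := Finset.sum_Ioc_consecutive (fun k => w k / (s k - t n)) (Nat.zero_le n) h2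
      have hb' : ∑ k ∈ Finset.Ioc 0 n, w k / (s k - t n)
          = (∑ k ∈ Finset.Ioc 0 (n-1), w k / (s k - t n)) + w n / (s n - t n) := by
        conv_lhs => rw [show n = (n-1)+1 by omega]
        rw [Finset.sum_Ioc_succ_top (Nat.zero_le _)]
        rw [show n-1+1 = n by omega]
      rw [e, e, ← ha, hb']
    have heq' := hroot n (by simp only [Finset.mem_Icc]; omega)
    rw [esplit] at heq'
    set Pre := ∑ k ∈ Finset.Icc 1 (n-1), w k / (s k - t n) with hPreDef
    set Post := ∑ k ∈ Finset.Ioc n M, w k / (s k - t n) with hPostDef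
    have heq2 : w n / (s n - t n) = b - t n - Pre - Post := by linarith
    have hwn : w n = (b - t n - Pre - Post) * (s n - t n) :=
      (div_eq_iff hd0.ne').mp heq2
    -- bounds on Post
    have hden : ∀ k, n < k → k ≤ M → 999/1000 * s k ≤ s k - t n ∧ 0 < s k := by
      intro k hk1 hk2
      have hsk := spos k (by omega) hk2
      have hgap := sgap n k h1 hk1 hk2
      refine ⟨?_, hsk⟩
      have := mul_lt_mul_of_pos_right hlam hsn
      linarith
    have postNN : 0 ≤ Post := by
      rw [hPostDef]
      apply Finset.sum_nonneg
      intro k hk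
      simp only [Finset.mem_Ioc] at hk
      obtain ⟨hd, hsk⟩ := hden k hk.1 hk.2
      exact div_nonneg (hwpos k (by simp only [Finset.mem_Icc]; omega)).le (by linarith)
    have postB : Post ≤ 1000/999 * Sstar := by
      rw [hPostDef, hSdef]
      calc ∑ k ∈ Finset.Ioc n M, w k / (s k - t n)
          ≤ ∑ k ∈ Finset.Ioc n M, 1000/999 * (w k / s k) := by
            apply Finset.sum_le_sum
            intro k hk
            simp only [Finset.mem_Ioc] at hk
            obtain ⟨hd, hsk⟩ := hden k hk.1 hk.2
            have hw := hwpos k (by simp only [Finset.mem_Icc]; omega)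
            calc w k / (s k - t n) ≤ w k / (999/1000 * s k) :=
                  div_le_div_of_nonneg_left hw.le (by linarith) hd
              _ = 1000/999 * (w k / s k) := by
                  rw [hcc _ _ _ hsk.ne' (by norm_num)]; norm_num
        _ ≤ ∑ k ∈ Finset.Icc 1 M, 1000/999 * (w k / s k) := by
            apply Finset.sum_le_sum_of_subset_of_nonneg
            · intro x hx
              simp only [Finset.mem_Ioc, Finset.mem_Icc] at *
              omega
            · intro i hi _
              exact mul_nonneg (by norm_num) (ratpos i hi).le
        _ = 1000/999 * ∑ k ∈ Finset.Icc 1 M, w k / s k := by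
            rw [Finset.mul_sum]
    have postb : 8 * kap * Post ≤ b := by
      linarith [mul_le_mul_of_nonneg_left postB (by linarith : (0:ℝ) ≤ 8 * kap),
        SstarB, mul_nonneg hkap0.le Spos.le]
    -- Pre is nonpositive
    have preNP : Pre ≤ 0 := by
      rw [hPreDef]
      apply Finset.sum_nonpos
      intro k hk
      simp only [Finset.mem_Icc] at hk
      have hk2 : k < n := by omega
      have h5 := (hint (n-1) (by simp only [Finset.mem_Icc]; omega)).2
      rw [show n-1+1 = n by omega] at h5
      have h6 : s k ≤ s (n-1) := smono k (n-1) hk.1 (by omega) (by omega)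
      exact div_nonpos_of_nonneg_of_nonpos
        (hwpos k (by simp only [Finset.mem_Icc]; omega)).le (by linarith)
    -- upper bound
    have hc : (0:ℝ) < lam * kap + 2 * kap + 2 * lam := by
      linarith [mul_pos hlam0 hkap0]
    have hR : lam * kap * b < (lam * kap + 2 * kap + 2 * lam) * (b - t n - Pre - Post) := by
      have h8 : (0:ℝ) < 8 * lam * kap := by linarith [mul_pos hlam0 hkap0]
      rw [← mul_lt_mul_iff_right₀ h8]
      have p1 := mul_lt_mul_of_pos_left htnb
        (mul_pos (by linarith : (0:ℝ) < 8 * kap) hc)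
      have p2 := mul_le_mul_of_nonneg_left postb (mul_pos hlam0 hc).le
      have p3 : (8 * lam * kap * (lam * kap + 2 * kap + 2 * lam)) * Pre ≤ 0 :=
        mul_nonpos_of_nonneg_of_nonpos
          (by linarith [mul_pos (mul_pos hlam0 hkap0) hc]) preNP
      have m2i : 0 ≤ kap * (15 * lam - 18) - 2 * lam := by
        linarith [mul_nonneg (by linarith : (0:ℝ) ≤ kap - 10)
          (by linarith : (0:ℝ) ≤ 15 * lam - 18)]
      have m1 : 0 ≤ b * (kap * kap) * (lam - 2) :=
        mul_nonneg (mul_nonneg hbpos.le (mul_nonneg hkap0.le hkap0.le)) (by linarith)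
      have m2 : 0 ≤ b * (lam * (kap * (15 * lam - 18) - 2 * lam)) :=
        mul_nonneg hbpos.le (mul_nonneg hlam0.le m2i)
      linarith [p1, p2, p3, m1, m2]
    have upper' : (s n - t n) * (lam * kap * b) < (lam * kap + 2 * kap + 2 * lam) * w n := by
      rw [hwn]
      linarith [mul_lt_mul_of_pos_right hR hd0]
    have hupper : s n - t n < (1 + 2 / lam + 2 / kap) * (w n / b) := by
      have hrw : (1 + 2 / lam + 2 / kap) * (w n / b)
          = ((lam * kap + 2 * kap + 2 * lam) * w n) / (lam * kap * b) := by
        have e1 : 1 + 2/lam + 2/kap = (lam*kap+2*kap+2*lam)/(lam*kap) := by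
          field_simp [hlam0.ne', hkap0.ne']
        rw [e1, div_mul_div_comm]
      rw [hrw, lt_div_iff₀ (mul_pos (mul_pos hlam0 hkap0) hbpos)]
      exact upper'
    -- t n is close to s n, in particular positive
    have hclamp : 0 ≤ lam * kap - 2 * kap - 2 * lam := by
      linarith [mul_nonneg (by linarith : (0:ℝ) ≤ lam - 4) (by linarith : (0:ℝ) ≤ kap - 4)]
    have t1 : 9 * kap * ((s n - t n) * (lam * kap * b)) < 2 * lam * kap * (b * s n) := by
      have q1 := mul_lt_mul_of_pos_left upper' (by linarith : (0:ℝ) < 9 * kap)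
      have q2 := mul_le_mul_of_nonneg_left (wsb n h1 h2) hc.le
      linarith [q1, q2, mul_nonneg hclamp (mul_nonneg hbpos.le hsn.le)]
    have t2 : 9 * kap * (s n - t n) < 2 * s n := by
      have hpos : (0:ℝ) < lam * kap * b := mul_pos (mul_pos hlam0 hkap0) hbpos
      have t1' : (9 * kap * (s n - t n)) * (lam * kap * b) < (2 * s n) * (lam * kap * b) := by
        linarith [t1]
      exact (mul_lt_mul_iff_left₀ hpos).1 t1'
    have htnD : 45 * (s n - t n) < s n := by
      linarith [t2, mul_nonneg (by linarith : (0:ℝ) ≤ kap - 10) hd0.le]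
    have htn_pos : 0 < t n := by linarith
    -- lower bound on Pre
    have preLB : -(1/900) * Sstar ≤ Pre := by
      have hterm : ∀ k ∈ Finset.Icc 1 (n-1),
          -(1/900 * (w k / s k)) ≤ w k / (s k - t n) := by
        intro k hk
        simp only [Finset.mem_Icc] at hk
        have hk2 : k < n := by omega
        have hsk := spos k hk.1 (by omega)
        have hw := hwpos k (by simp only [Finset.mem_Icc]; omega)
        have hgap := sgap k n hk.1 hk2 h2
        have hden2 : 900 * s k ≤ t n - s k := by
          have := mul_lt_mul_of_pos_right hlam hsk
          linarith
        rw [show s k - t n = -(t n - s k) by ring, div_neg, neg_le_neg_iff]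
        calc w k / (t n - s k) ≤ w k / (900 * s k) :=
              div_le_div_of_nonneg_left hw.le (by linarith) hden2
          _ = 1/900 * (w k / s k) := by
              rw [hcc _ _ _ hsk.ne' (by norm_num)]; norm_num
      have hsum := Finset.sum_le_sum hterm
      have hL : ∑ k ∈ Finset.Icc 1 (n-1), -(1/900 * (w k / s k))
          = -(1/900 * ∑ k ∈ Finset.Icc 1 (n-1), w k / s k) := by
        rw [Finset.sum_neg_distrib, Finset.mul_sum]
      have hsub : (∑ k ∈ Finset.Icc 1 (n-1), w k / s k) ≤ Sstar := by
        rw [hSdef]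
        apply Finset.sum_le_sum_of_subset_of_nonneg
        · intro x hx
          simp only [Finset.mem_Icc] at *
          omega
        · intro i hi _
          exact (ratpos i hi).le
      rw [hPreDef]
      rw [hL] at hsum
      linarith [hsum, hsub]
    have preb : -b < 8100 * kap * Pre := by
      linarith [mul_le_mul_of_nonneg_left preLB (by linarith : (0:ℝ) ≤ 8100 * kap), SstarB]
    -- lower bound
    have hL' : (kap - 2) * (b - t n - Pre - Post) < kap * b := by
      have hk2 : (0:ℝ) < kap - 2 := by linarith
      have h81 : (0:ℝ) < 8100 * kap := by linarith
      rw [← mul_lt_mul_iff_right₀ h81]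
      have z1 := mul_lt_mul_of_pos_left preb hk2
      have z2 : 0 ≤ 8100 * kap * (kap - 2) * Post :=
        mul_nonneg (by nlinarith [mul_pos hkap0 hkap0]) postNN
      have z3 : 0 < 8100 * kap * (kap - 2) * t n :=
        mul_pos (by nlinarith [mul_pos hkap0 hkap0]) htn_pos
      linarith [z1, z2, z3, mul_pos hbpos hkap0, hbpos]
    have hlower : (1 - 2 / kap) * (w n / b) < s n - t n := by
      have hrw : (1 - 2 / kap) * (w n / b) = ((kap - 2) * w n) / (kap * b) := by
        have e1 : 1 - 2/kap = (kap-2)/kap := by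
          field_simp [hkap0.ne']
        rw [e1, div_mul_div_comm]
      rw [hrw, div_lt_iff₀ (mul_pos hkap0 hbpos)]
      rw [hwn]
      linarith [mul_lt_mul_of_pos_right hL' hd0]
    exact ⟨hlower, hupper⟩
  refine ⟨?_, ?_, ?_⟩
  · intro n hn
    simp only [Finset.mem_Icc] at hn
    exact main n hn.1 hn.2
  -- b < t N
  all_goals {
    have hintM := (hint M (by simp only [Finset.mem_Icc]; omega)).2
    have heqN := hroot (M+1) (by simp only [Finset.mem_Icc]; omega)
    have hsneg : (∑ k ∈ Finset.Icc 1 M, w k / (s k - t (M+1))) < 0 := by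
      apply Finset.sum_neg
      · intro k hk
        simp only [Finset.mem_Icc] at hk
        have h6 : s k ≤ s M := smono k M hk.1 hk.2 le_rfl
        exact div_neg_of_pos_of_neg (hwpos k (by simp only [Finset.mem_Icc]; omega))
          (by linarith)
      · exact ⟨1, by simp only [Finset.mem_Icc]; omega⟩
    have lowerN : b < t (M+1) := by linarith
    have hbsM : 0 < b - s M := by
      linarith [mul_pos (show (0:ℝ) < lam - 1 by linarith) hsM]
    have htermB : ∀ k ∈ Finset.Icc 1 M,
        -(w k / (b - s M)) ≤ w k / (s k - t (M+1)) := by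
      intro k hk
      simp only [Finset.mem_Icc] at hk
      have hw := hwpos k (by simp only [Finset.mem_Icc]; omega)
      have h6 : s k ≤ s M := smono k M hk.1 hk.2 le_rfl
      have h7 : b - s M ≤ t (M+1) - s k := by linarith
      rw [show s k - t (M+1) = -(t (M+1) - s k) by ring, div_neg, neg_le_neg_iff]
      exact div_le_div_of_nonneg_left hw.le hbsM h7
    have hsum := Finset.sum_le_sum htermB
    have hLrw : ∑ k ∈ Finset.Icc 1 M, -(w k / (b - s M)) = -(W / (b - s M)) := by
      rw [Finset.sum_neg_distrib, ← Finset.sum_div, ← hWdef]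
    rw [hLrw] at hsum
    have hTb : t (M+1) - b ≤ W / (b - s M) := by linarith
    have hWb : W / (b - s M) < b / (lam * kap) := by
      rw [div_lt_div_iff₀ hbsM (mul_pos hlam0 hkap0)]
      have q1 := mul_lt_mul_of_pos_left hW2 hlam0
      have q2 := mul_lt_mul_of_pos_left hb hbpos
      have q3 := mul_lt_mul_of_pos_right hlam hsM
      have q4 := mul_lt_mul_of_pos_left q3 hbpos
      nlinarith [q1, q2, q4, sq_nonneg b, hbpos]
    have hfin : (1 + 1 / (lam * kap)) * b = b + b / (lam * kap) := by
      ring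
    first
      | exact lowerN
      | (rw [hfin]; linarith [hTb, hWb])
  }
end

section
/- Under the reversed-Stieltjes-step hypotheses (b > λ s_{N-1}, s_{n+1} > λ s_n, λ > 1000; w_{n+1}/w_n > κ s_{n+1}/s_n, κ > 10; w_{n+1}/s_{n+1}^2 < θ w_n/s_n^2, θ < 1/10; 10θ^{-1} s_{N-1}^2 < Σ w_k < (1/10)κ^{-1} b s_{N-1}), the new weights μ_n = (1 + Σ_k w_k/(s_k - t_n)^2)^{-1} satisfy (1 + ε_n)^2 μ_{n+1}/μ_n > w_{n+1}/w_n for n < N-1 with ε_n = κ^{n-N+1}, and μ_N/μ_{N-1} > κ t_N/t_{N-1}. -/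
private lemma divmono_pos {a x y : ℝ} (ha : 0 ≤ a) (hy : 0 < y) (h : y ≤ x) :
    a / x ≤ a / y := by
  have hx : 0 < x := lt_of_lt_of_le hy h
  rw [div_le_div_iff₀ hx hy]
  exact mul_le_mul_of_nonneg_left h ha

private lemma divmono_neg {a x y : ℝ} (ha : 0 ≤ a) (hx : x < 0) (h : y ≤ x) :
    a / x ≤ a / y := by
  have hy : y < 0 := lt_of_le_of_lt h hx
  have hx' : x ≠ 0 := ne_of_lt hx
  have hy' : y ≠ 0 := ne_of_lt hy
  have hkey : a / y - a / x = a * (x - y) / (x * y) := by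
    field_simp
  have h2 : 0 ≤ a * (x - y) / (x * y) :=
    div_nonneg (mul_nonneg ha (by linarith)) (le_of_lt (mul_pos_of_neg_of_neg hx hy))
  linarith

private lemma key_id {wk sk c tm : ℝ} (h1 : sk - c ≠ 0) (h2 : sk - tm ≠ 0) :
    wk/(sk - c) - wk/(sk - tm) = (c - tm) * (wk/((sk - c)*(sk - tm))) := by
  field_simp
  ring

private lemma sum_split (f : ℕ → ℝ) (m M : ℕ) (h1 : 1 ≤ m) (h2 : m ≤ M) :
    ∑ k ∈ Finset.Icc 1 M, f k
      = ∑ k ∈ Finset.Icc 1 (m-1), f k + f m + ∑ k ∈ Finset.Icc (m+1) M, f k := by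
  have e1 : Finset.Icc 1 M = Finset.Icc 1 (m-1) ∪ Finset.Icc m M := by
    ext k; simp only [Finset.mem_Icc, Finset.mem_union]; omega
  have hd : Disjoint (Finset.Icc 1 (m-1)) (Finset.Icc m M) := by
    rw [Finset.disjoint_left]; intro k hk hk2
    simp only [Finset.mem_Icc] at hk hk2; omega
  have e2 : Finset.Icc m M = insert m (Finset.Icc (m+1) M) := by
    ext k; simp only [Finset.mem_Icc, Finset.mem_insert]; omega
  have hm : m ∉ Finset.Icc (m+1) M := by simp [Finset.mem_Icc]
  rw [e1, Finset.sum_union hd, e2, Finset.sum_insert hm]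
  ring

private lemma sum_head (f : ℕ → ℝ) (c M : ℕ) (h : c ≤ M) :
    ∑ k ∈ Finset.Icc c M, f k = f c + ∑ k ∈ Finset.Icc (c+1) M, f k := by
  have e2 : Finset.Icc c M = insert c (Finset.Icc (c+1) M) := by
    ext k; simp only [Finset.mem_Icc, Finset.mem_insert]; omega
  rw [e2, Finset.sum_insert (by simp [Finset.mem_Icc])]

private lemma sum_top (f : ℕ → ℝ) (a m : ℕ) (h : a ≤ m + 1) :
    ∑ k ∈ Finset.Icc a (m+1), f k = ∑ k ∈ Finset.Icc a m, f k + f (m+1) := by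
  have e2 : Finset.Icc a (m+1) = insert (m+1) (Finset.Icc a m) := by
    ext k; simp only [Finset.mem_Icc, Finset.mem_insert]; omega
  rw [e2, Finset.sum_insert (by simp [Finset.mem_Icc])]
  ring

set_option maxHeartbeats 4000000 in
/-- Lower bound for the new weights after one step of the reversed Stieltjes algorithm. -/
theorem stmt11 (N : ℕ) (hN : 2 ≤ N) (lam kap th b : ℝ)
    (w s t μ : ℕ → ℝ)
    (hlam : 1000 < lam) (hkap : 10 < kap) (hth : th < 1 / 10)
    (hwpos : ∀ n ∈ Finset.Icc 1 (N - 1), 0 < w n)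
    (hb : lam * s (N - 1) < b)
    (hs : ∀ n ∈ Finset.Icc 1 (N - 2), lam * s n < s (n + 1) ∧ 0 < s n)
    (hs1 : 0 < s 1)
    (hwgrow : ∀ n ∈ Finset.Icc 1 (N - 2), kap * (s (n + 1) / s n) < w (n + 1) / w n)
    (hwdec : ∀ n ∈ Finset.Icc 1 (N - 2), w (n + 1) / s (n + 1) ^ 2 < th * (w n / s n ^ 2))
    (hsum1 : 10 * th⁻¹ * s (N - 1) ^ 2 < ∑ k ∈ Finset.Icc 1 (N - 1), w k)
    (hsum2 : ∑ k ∈ Finset.Icc 1 (N - 1), w k < 1 / 10 * kap⁻¹ * (b * s (N - 1)))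
    (hroot : ∀ n ∈ Finset.Icc 1 N,
      t n - b + ∑ k ∈ Finset.Icc 1 (N - 1), w k / (s k - t n) = 0)
    (hint : ∀ n ∈ Finset.Icc 1 (N - 1), t n < s n ∧ s n < t (n + 1))
    (hμ : ∀ n ∈ Finset.Icc 1 N,
      μ n = (1 + ∑ k ∈ Finset.Icc 1 (N - 1), w k / (s k - t n) ^ 2)⁻¹) :
    (∀ n ∈ Finset.Icc 1 (N - 2),
      w (n + 1) / w n <
        (1 + kap ^ ((n : ℤ) - (N : ℤ) + 1)) ^ 2 * (μ (n + 1) / μ n)) ∧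
    kap * (t N / t (N - 1)) < μ N / μ (N - 1) := by
  obtain ⟨M, rfl⟩ : ∃ M, N = M + 2 := ⟨N - 2, by omega⟩
  simp only [show M + 2 - 1 = M + 1 by omega, show M + 2 - 2 = M by omega] at *
  clear hN hsum1
  have hk0 : (0:ℝ) < kap := by linarith
  have hwp : ∀ k, 1 ≤ k → k ≤ M+1 → 0 < w k :=
    fun k h1 h2 => hwpos k (Finset.mem_Icc.mpr ⟨h1, h2⟩)
  have hsp : ∀ k, 1 ≤ k → k ≤ M+1 → 0 < s k := by
    intro k h1 h2
    rcases Nat.lt_or_ge k (M+1) with h | h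
    · exact (hs k (Finset.mem_Icc.mpr ⟨h1, by omega⟩)).2
    · have hk : k = M+1 := by omega
      subst hk
      rcases Nat.eq_zero_or_pos M with hM | hM
      · subst hM; exact hs1
      · have h3 := hs M (Finset.mem_Icc.mpr ⟨hM, le_refl M⟩)
        nlinarith [h3.1, h3.2]
  have hsm : ∀ k j, 1 ≤ j → j < k → k ≤ M+1 → 1000 * s j < s k := by
    intro k
    induction k with
    | zero => intro j h1 h2 h3; omega
    | succ K ih =>
      intro j h1 h2 h3
      rcases Nat.lt_or_ge j K with h | h
      · have h4 := ih j h1 h (by omega)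
        have h5 := hs K (Finset.mem_Icc.mpr ⟨by omega, by omega⟩)
        nlinarith [h5.1, h5.2, mul_pos (show (0:ℝ) < lam - 1 by linarith) h5.2]
      · have hjK : j = K := by omega
        subst hjK
        have h5 := hs j (Finset.mem_Icc.mpr ⟨h1, by omega⟩)
        nlinarith [h5.1, h5.2, mul_pos (show (0:ℝ) < lam - 1000 by linarith) h5.2]
  have hsle : ∀ j k, 1 ≤ j → j ≤ k → k ≤ M+1 → s j ≤ s k := by
    intro j k h1 h2 h3
    rcases Nat.eq_or_lt_of_le h2 with h | h
    · rw [h]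
    · have h4 := hsm k j h1 h h3
      nlinarith [hsp j h1 (by omega)]
  have hbp : (0:ℝ) < b := by
    nlinarith [hsp (M+1) (by omega) (le_refl (M+1)), mul_pos (show (0:ℝ) < lam by linarith)
      (hsp (M+1) (by omega) (le_refl (M+1)))]
  have hsb : 1000 * s (M+1) < b := by
    nlinarith [hsp (M+1) (by omega) (le_refl (M+1)),
      mul_pos (show (0:ℝ) < lam - 1000 by linarith) (hsp (M+1) (by omega) (le_refl (M+1)))]
  have hWp : 0 < ∑ k ∈ Finset.Icc 1 (M+1), w k :=
    Finset.sum_pos (fun k hk => hwp k (Finset.mem_Icc.mp hk).1 (Finset.mem_Icc.mp hk).2)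
      ⟨1, Finset.mem_Icc.mpr ⟨le_refl 1, by omega⟩⟩
  have hwNW : w (M+1) ≤ ∑ k ∈ Finset.Icc 1 (M+1), w k :=
    Finset.single_le_sum
      (fun k hk => le_of_lt (hwp k (Finset.mem_Icc.mp hk).1 (Finset.mem_Icc.mp hk).2))
      (Finset.mem_Icc.mpr ⟨by omega, le_refl _⟩)
  have hWub : (∑ k ∈ Finset.Icc 1 (M+1), w k) * (10*kap) < b * s (M+1) := by
    have hki : kap * kap⁻¹ = 1 := mul_inv_cancel₀ (ne_of_gt hk0)
    have h1 : (0:ℝ) < 10 * kap := by linarith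
    have h2 := mul_lt_mul_of_pos_left hsum2 h1
    have h3 : 10 * kap * (1/10 * kap⁻¹ * (b * s (M+1))) = (kap * kap⁻¹) * (b * s (M+1)) := by
      ring
    rw [h3, hki, one_mul] at h2
    linarith
  have hgrow : ∀ m, 1 ≤ m → m ≤ M → kap * s (m+1) * w m < w (m+1) * s m := by
    intro m h1 h2
    have hg := hwgrow m (Finset.mem_Icc.mpr ⟨h1, h2⟩)
    have hsm1 : 0 < s m := hsp m h1 (by omega)
    have hwm : 0 < w m := hwp m h1 (by omega)
    rw [← mul_div_assoc] at hg
    exact (div_lt_div_iff₀ hsm1 hwm).mp hg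
  have hratio : ∀ m i, 1 ≤ m → m + i ≤ M+1 → w m * s (m+i) * kap^i ≤ w (m+i) * s m := by
    intro m i h1
    induction i with
    | zero =>
      intro h2
      simp only [Nat.add_zero, pow_zero, mul_one]
      exact le_of_eq (by ring)
    | succ i ih =>
      intro h2
      have h3 := ih (by omega)
      have h4 := hgrow (m+i) (by omega) (by omega)
      have hsmi : 0 < s (m+i) := hsp _ (by omega) (by omega)
      have hsmi1 : 0 < s (m+i+1) := hsp _ (by omega) (by omega)
      have hwm : 0 < w m := hwp _ h1 (by omega)
      have hkp : (0:ℝ) < kap^i := pow_pos hk0 i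
      have key : w m * s (m+i+1) * kap^(i+1) * s (m+i) ≤ w (m+i+1) * s m * s (m+i) := by
        have e1 := mul_le_mul_of_nonneg_right h3 (le_of_lt (mul_pos hk0 hsmi1))
        have e2 := mul_le_mul_of_nonneg_right (le_of_lt h4)
          (le_of_lt (mul_pos (hsp m h1 (by omega)) hkp))
        rw [pow_succ]
        nlinarith [e1, e2]
      exact le_of_mul_le_mul_right key hsmi
  have hwsb : ∀ m, 1 ≤ m → m ≤ M+1 → w m * kap^(M+1-m) * (10*kap) ≤ b * s m := by
    intro m h1 h2
    have h3 := hratio m (M+1-m) h1 (by omega)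
    rw [show m + (M+1-m) = M+1 by omega] at h3
    have hsm : 0 < s m := hsp m h1 h2
    have hsM : 0 < s (M+1) := hsp _ (by omega) (le_refl _)
    have h4 : w (M+1) * s m ≤ (∑ k ∈ Finset.Icc 1 (M+1), w k) * s m :=
      mul_le_mul_of_nonneg_right hwNW (le_of_lt hsm)
    have h6 : w m * kap^(M+1-m) * (10*kap) * s (M+1) ≤ b * s m * s (M+1) := by
      have e1 := mul_le_mul_of_nonneg_right (le_trans h3 h4)
        (by positivity : (0:ℝ) ≤ 10*kap)
      have e2 := mul_lt_mul_of_pos_right hWub hsm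
      nlinarith [e1, e2]
    exact le_of_mul_le_mul_right h6 hsM
  have hwco : ∀ m, 1 ≤ m → m ≤ M+1 → 100 * w m ≤ b * s m := by
    intro m h1 h2
    have h3 := hwsb m h1 h2
    have h4 : (1:ℝ) ≤ kap^(M+1-m) := one_le_pow₀ (by linarith)
    have h5 : (100:ℝ) ≤ kap^(M+1-m) * (10*kap) := by
      nlinarith [mul_le_mul_of_nonneg_right h4 (show (0:ℝ) ≤ 10*kap by linarith)]
    nlinarith [hwp m h1 h2, mul_le_mul_of_nonneg_left h5 (le_of_lt (hwp m h1 h2))]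
  have hwadj : ∀ m, 1 ≤ m → m ≤ M → 10000 * w m ≤ w (m+1) := by
    intro m h1 h2
    have h3 := hgrow m h1 h2
    have h4 := hsm (m+1) m h1 (by omega) (by omega)
    have hsm0 : 0 < s m := hsp m h1 (by omega)
    have hwm : 0 < w m := hwp m h1 (by omega)
    have key : 10000 * w m * s m ≤ w (m+1) * s m := by
      have a1 : 10 * s (m+1) * w m ≤ kap * s (m+1) * w m := by
        nlinarith [mul_pos (hsp (m+1) (by omega) (by omega)) hwm]
      have a2 : 10 * (1000 * s m) * w m ≤ 10 * s (m+1) * w m := by nlinarith [hwm]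
      linarith [a1, a2, h3]
    exact le_of_mul_le_mul_right key hsm0
  have hhead : ∀ m, 1 ≤ m → m ≤ M+1 →
      9999 * (∑ k ∈ Finset.Icc 1 m, w k) ≤ 10000 * w m := by
    intro m hm
    induction m, hm using Nat.le_induction with
    | base =>
      intro _
      rw [Finset.Icc_self, Finset.sum_singleton]
      nlinarith [hwp 1 (le_refl 1) (by omega)]
    | succ m hm ih =>
      intro h2
      have h3 := ih (by omega)
      rw [sum_top (fun k => w k) 1 m (by omega)]
      have h4 := hwadj m hm (by omega)
      linarith
  have hsumws : ∀ m, 1 ≤ m → m ≤ M+1 →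
      9 * (∑ k ∈ Finset.Icc 1 m, w k / s k) ≤ 10 * (w m / s m) := by
    intro m hm
    induction m, hm using Nat.le_induction with
    | base =>
      intro _
      rw [Finset.Icc_self, Finset.sum_singleton]
      have := div_nonneg (le_of_lt (hwp 1 (le_refl 1) (by omega)))
        (le_of_lt (hsp 1 (le_refl 1) (by omega)))
      linarith
    | succ m hm ih =>
      intro h2
      have h3 := ih (by omega)
      rw [sum_top (fun k => w k / s k) 1 m (by omega)]
      have h4 : 10 * (w m / s m) ≤ w (m+1) / s (m+1) := by
        have h5 := hgrow m hm (by omega)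
        have hsm0 := hsp m hm (by omega)
        have hsm1 := hsp (m+1) (by omega) (by omega)
        have hwm := hwp m hm (by omega)
        rw [show 10*(w m/s m) = (10*w m)/s m from by ring, div_le_div_iff₀ hsm0 hsm1]
        nlinarith [mul_pos hwm hsm1]
      linarith
  have hU2 : ∀ a, 1 ≤ a → a ≤ M+1 →
      9 * (∑ k ∈ Finset.Icc (a+1) (M+1), w k / s k^2) ≤ w a / s a^2 := by
    intro a h1 h2
    have hqa : 0 ≤ w a / s a^2 :=
      div_nonneg (le_of_lt (hwp a h1 h2)) (sq_nonneg _)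
    rcases Nat.lt_or_ge a (M+1) with h | h
    · have key : ∀ m, a+1 ≤ m → m ≤ M+1 →
          9 * (∑ k ∈ Finset.Icc (a+1) m, w k / s k^2) ≤ w a/s a^2 - w m/s m^2 := by
        intro m hm
        induction m, hm using Nat.le_induction with
        | base =>
          intro _
          rw [Finset.Icc_self, Finset.sum_singleton]
          have h4 := hwdec a (Finset.mem_Icc.mpr ⟨h1, by omega⟩)
          nlinarith [mul_nonneg (show (0:ℝ) ≤ 1/10 - th by linarith) hqa]
        | succ m hm ihm =>
          intro hm2
          have h3 := ihm (by omega)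
          rw [sum_top (fun k => w k / s k^2) (a+1) m (by omega)]
          have h4 := hwdec m (Finset.mem_Icc.mpr ⟨by omega, by omega⟩)
          have h6 : 0 ≤ w m / s m^2 :=
            div_nonneg (le_of_lt (hwp m (by omega) (by omega))) (sq_nonneg _)
          nlinarith [mul_nonneg (show (0:ℝ) ≤ 1/10 - th by linarith) h6]
      have h5 := key (M+1) (by omega) (le_refl _)
      have h6 : 0 ≤ w (M+1)/s (M+1)^2 :=
        div_nonneg (le_of_lt (hwp (M+1) (by omega) (le_refl _))) (sq_nonneg _)
      linarith
    · rw [show Finset.Icc (a+1) (M+1) = ∅ from Finset.Icc_eq_empty (by omega),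
        Finset.sum_empty]
      linarith
  have hdp : ∀ m, 1 ≤ m → m ≤ M+1 → 0 < s m - t m := by
    intro m h1 h2
    have h3 := (hint m (Finset.mem_Icc.mpr ⟨h1, h2⟩)).1
    linarith
  have hslt : ∀ m, 1 ≤ m → m ≤ M+1 → ∀ k, 1 ≤ k → k < m → s k < t m := by
    intro m h1 h2 k hk1 hk2
    have h3 : s k ≤ s (m-1) := hsle k (m-1) hk1 (by omega) (by omega)
    have h4 := (hint (m-1) (Finset.mem_Icc.mpr ⟨by omega, by omega⟩)).2
    rw [show m-1+1 = m by omega] at h4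
    linarith
  have htails : ∀ (a : ℕ) (x : ℝ), 1 ≤ a →
      (∀ k, a ≤ k → k ≤ M+1 → 1000 * x ≤ s k) →
      0 ≤ (∑ k ∈ Finset.Icc a (M+1), w k / (s k - x)) ∧
      (∑ k ∈ Finset.Icc a (M+1), w k / (s k - x)) ≤ b / 80 := by
    intro a x ha hx
    have hpt : ∀ k ∈ Finset.Icc a (M+1),
        0 ≤ w k / (s k - x) ∧ w k / (s k - x) ≤ (1000/999) * (w k / s k) := by
      intro k hk
      rw [Finset.mem_Icc] at hk
      have hwk := hwp k (by omega) hk.2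
      have hsk := hsp k (by omega) hk.2
      have h1 := hx k hk.1 hk.2
      have h2 : (999/1000) * s k ≤ s k - x := by linarith
      have h3 : 0 < s k - x := by nlinarith
      constructor
      · exact div_nonneg (le_of_lt hwk) (le_of_lt h3)
      · have h4 : w k / (s k - x) ≤ w k / ((999/1000) * s k) :=
          divmono_pos (le_of_lt hwk) (by positivity) h2
        have h5 : w k / ((999/1000) * s k) = (1000/999) * (w k / s k) := by
          field_simp
        linarith
    constructor
    · exact Finset.sum_nonneg (fun k hk => (hpt k hk).1)
    · have h1 : (∑ k ∈ Finset.Icc a (M+1), w k / (s k - x)) ≤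
          ∑ k ∈ Finset.Icc a (M+1), (1000/999) * (w k / s k) :=
        Finset.sum_le_sum (fun k hk => (hpt k hk).2)
      have h2 : (∑ k ∈ Finset.Icc a (M+1), (1000/999) * (w k / s k)) =
          (1000/999) * ∑ k ∈ Finset.Icc a (M+1), w k / s k := by
        rw [Finset.mul_sum]
      have h3 : (∑ k ∈ Finset.Icc a (M+1), w k / s k) ≤
          ∑ k ∈ Finset.Icc 1 (M+1), w k / s k := by
        apply Finset.sum_le_sum_of_subset_of_nonneg
        · exact Finset.Icc_subset_Icc (by omega) (le_refl _)
        · intro k hk _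
          rw [Finset.mem_Icc] at hk
          exact div_nonneg (le_of_lt (hwp k hk.1 hk.2)) (le_of_lt (hsp k hk.1 hk.2))
      have h4 := hsumws (M+1) (by omega) (le_refl _)
      have h5 : w (M+1) / s (M+1) ≤ b / 100 := by
        rw [div_le_div_iff₀ (hsp (M+1) (by omega) (le_refl _)) (by norm_num : (0:ℝ) < 100)]
        linarith [hwco (M+1) (by omega) (le_refl _)]
      have hsum_nonneg : 0 ≤ ∑ k ∈ Finset.Icc a (M+1), w k / s k :=
        Finset.sum_nonneg (fun k hk => by
          rw [Finset.mem_Icc] at hk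
          exact div_nonneg (le_of_lt (hwp k (by omega) hk.2)) (le_of_lt (hsp k (by omega) hk.2)))
      linarith
  have hd2 : ∀ m, 1 ≤ m → m ≤ M+1 → b * (s m - t m) ≤ 2 * w m := by
    intro m h1 h2
    have hwm := hwp m h1 h2
    have hsm0 := hsp m h1 h2
    have htm := hdp m h1 h2
    have hco := hwco m h1 h2
    have hwb : 2 * (w m / b) ≤ s m / 50 := by
      have h3 : w m / b ≤ s m / 100 := by
        rw [div_le_div_iff₀ hbp (by norm_num : (0:ℝ) < 100)]
        linarith
      linarith
    have hwbp : 0 < w m / b := div_pos hwm hbp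
    have hc1 : 49/50 * s m ≤ s m - 2*(w m / b) := by linarith
    have hc2 : s m - 2*(w m / b) < s m := by linarith
    have hcpos : 0 < s m - 2*(w m / b) := by linarith
    have hrt := hroot m (Finset.mem_Icc.mpr ⟨h1, by omega⟩)
    have hpt : ∀ k ∈ Finset.Icc 1 (M+1),
        w k / (s k - (s m - 2*(w m / b))) - w k / (s k - t m)
          = ((s m - 2*(w m / b)) - t m) *
            (w k / ((s k - (s m - 2*(w m / b))) * (s k - t m)))
        ∧ 0 ≤ w k / ((s k - (s m - 2*(w m / b))) * (s k - t m)) := by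
      intro k hk
      rw [Finset.mem_Icc] at hk
      have hwk := hwp k hk.1 hk.2
      have hprod : 0 < (s k - (s m - 2*(w m / b))) * (s k - t m) := by
        rcases Nat.lt_or_ge k m with h | h
        · have h5 := hslt m h1 h2 k hk.1 h
          have h7 := hsm m k hk.1 h h2
          have h6 : s k < s m - 2*(w m / b) := by
            nlinarith [hsp k hk.1 (by omega)]
          exact mul_pos_of_neg_of_neg (by linarith) (by linarith)
        · have h5 : s m ≤ s k := hsle m k h1 h hk.2
          exact mul_pos (by linarith) (by linarith)
      have hne1 : s k - (s m - 2*(w m / b)) ≠ 0 := by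
        intro hh; rw [hh, zero_mul] at hprod; exact lt_irrefl 0 hprod
      have hne2 : s k - t m ≠ 0 := by
        intro hh; rw [hh, mul_zero] at hprod; exact lt_irrefl 0 hprod
      constructor
      · exact key_id hne1 hne2
      · exact div_nonneg (le_of_lt hwk) (le_of_lt hprod)
    have hQ : 0 ≤ ∑ k ∈ Finset.Icc 1 (M+1),
        w k / ((s k - (s m - 2*(w m / b))) * (s k - t m)) :=
      Finset.sum_nonneg (fun k hk => (hpt k hk).2)
    have hdiffsum :
        (∑ k ∈ Finset.Icc 1 (M+1), w k / (s k - (s m - 2*(w m / b))))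
          - (∑ k ∈ Finset.Icc 1 (M+1), w k / (s k - t m))
        = ((s m - 2*(w m / b)) - t m) *
          ∑ k ∈ Finset.Icc 1 (M+1), w k / ((s k - (s m - 2*(w m / b))) * (s k - t m)) := by
      rw [← Finset.sum_sub_distrib, Finset.mul_sum]
      exact Finset.sum_congr rfl (fun k hk => (hpt k hk).1)
    have hsplit := sum_split (fun k => w k / (s k - (s m - 2*(w m / b)))) m (M+1) h1 h2
    have hmid : w m / (s m - (s m - 2*(w m / b))) = b/2 := by
      have hb' : b ≠ 0 := ne_of_gt hbp
      have hw' : w m ≠ 0 := ne_of_gt hwm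
      rw [show s m - (s m - 2*(w m / b)) = 2*(w m / b) from by ring]
      field_simp
    have hlow : (∑ k ∈ Finset.Icc 1 (m-1), w k / (s k - (s m - 2*(w m / b)))) ≤ 0 := by
      apply Finset.sum_nonpos
      intro k hk
      rw [Finset.mem_Icc] at hk
      have h7 := hsm m k hk.1 (by omega) h2
      have h6 : s k < s m - 2*(w m / b) := by
        nlinarith [hsp k hk.1 (by omega)]
      have e : w k / (s k - (s m - 2*(w m / b)))
          = -(w k / ((s m - 2*(w m / b)) - s k)) := by
        rw [show s k - (s m - 2*(w m / b)) = -((s m - 2*(w m / b)) - s k) from by ring,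
          div_neg]
      rw [e]
      exact neg_nonpos.mpr (div_nonneg (le_of_lt (hwp k hk.1 (by omega))) (by linarith))
    have htail := htails (m+1) (s m - 2*(w m / b)) (by omega) (fun k hk1 hk2 => by
      have h7 := hsm k m h1 (by omega) hk2
      nlinarith [hsp m h1 h2])
    have hG : 0 < b - (s m - 2*(w m / b))
        - ∑ k ∈ Finset.Icc 1 (M+1), w k / (s k - (s m - 2*(w m / b))) := by
      rw [hsplit, hmid]
      have hcb : s m ≤ s (M+1) := hsle m (M+1) h1 h2 (le_refl _)
      linarith [htail.2, hlow]
    have hid : (t m - (s m - 2*(w m / b))) *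
        (1 + ∑ k ∈ Finset.Icc 1 (M+1),
          w k / ((s k - (s m - 2*(w m / b))) * (s k - t m)))
        = b - (s m - 2*(w m / b))
          - ∑ k ∈ Finset.Icc 1 (M+1), w k / (s k - (s m - 2*(w m / b))) := by
      nlinarith [hdiffsum, hrt]
    have hQ1 : (0:ℝ) < 1 + ∑ k ∈ Finset.Icc 1 (M+1),
        w k / ((s k - (s m - 2*(w m / b))) * (s k - t m)) := by linarith
    have htc : 0 < t m - (s m - 2*(w m / b)) := by
      by_contra hcon
      push_neg at hcon
      nlinarith [hid, hG, hQ1]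
    have hfin : b * (s m - t m) < b * (2*(w m / b)) := by
      have : s m - t m < 2*(w m / b) := by linarith
      exact mul_lt_mul_of_pos_left this hbp
    have hfin2 : b * (2*(w m / b)) = 2 * w m := by
      have hb' : b ≠ 0 := ne_of_gt hbp
      field_simp
    linarith
  have htlow : ∀ m, 1 ≤ m → m ≤ M+1 → 49/50 * s m ≤ t m := by
    intro m h1 h2
    have h3 := hd2 m h1 h2
    have h4 := hwco m h1 h2
    have h5 : b * (s m - t m) ≤ b * (s m/50) := by linarith
    have h6 := le_of_mul_le_mul_left h5 hbp
    linarith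
  have hRneg : ∀ m, 1 ≤ m → m ≤ M+1 →
      -(b/1000) ≤ (∑ k ∈ Finset.Icc 1 (m-1), w k/(s k - t m)) ∧
      (∑ k ∈ Finset.Icc 1 (m-1), w k/(s k - t m)) ≤ 0 := by
    intro m h1 h2
    rcases Nat.eq_or_lt_of_le h1 with h | h
    · rw [show Finset.Icc 1 (m-1) = ∅ from Finset.Icc_eq_empty (by omega),
        Finset.sum_empty]
      constructor
      · linarith [hbp]
      · exact le_refl 0
    · have hm2 : 2 ≤ m := h
      have hsm0 := hsp m h1 h2
      have hgap : ∀ k, 1 ≤ k → k ≤ m-1 → (19/20) * s m ≤ t m - s k ∧ s k - t m < 0 := by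
        intro k hk1 hk2
        have h3 : s k ≤ s (m-1) := hsle k (m-1) hk1 (by omega) (by omega)
        have h4 := hsm m (m-1) (by omega) (by omega) h2
        have h5 := htlow m h1 h2
        constructor
        · linarith
        · linarith
      constructor
      · have hp : ∀ k ∈ Finset.Icc 1 (m-1),
            -(w k / ((19/20)*s m)) ≤ w k/(s k - t m) := by
          intro k hk
          rw [Finset.mem_Icc] at hk
          have hg := hgap k hk.1 hk.2
          have hwk := hwp k hk.1 (by omega)
          have e1 : w k/(s k - t m) = -(w k/(t m - s k)) := by
            rw [show s k - t m = -(t m - s k) from by ring, div_neg]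
          have e2 : w k/(t m - s k) ≤ w k/((19/20)*s m) :=
            divmono_pos (le_of_lt hwk) (by positivity) hg.1
          rw [e1]
          linarith
        have hs1' := Finset.sum_le_sum hp
        have hs2 : (∑ k ∈ Finset.Icc 1 (m-1), -(w k / ((19/20)*s m)))
            = -((∑ k ∈ Finset.Icc 1 (m-1), w k) / ((19/20)*s m)) := by
          rw [Finset.sum_neg_distrib, Finset.sum_div]
        have hh := hhead (m-1) (by omega) (by omega)
        have hwadj2 := hwadj (m-1) (by omega) (by omega)
        rw [show m-1+1 = m by omega] at hwadj2
        have hwc := hwco m h1 h2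
        have hfin : (∑ k ∈ Finset.Icc 1 (m-1), w k) / ((19/20)*s m) ≤ b/1000 := by
          rw [div_le_div_iff₀ (by positivity) (by norm_num : (0:ℝ) < 1000)]
          nlinarith
        rw [hs2] at hs1'
        linarith
      · apply Finset.sum_nonpos
        intro k hk
        rw [Finset.mem_Icc] at hk
        have hg := hgap k hk.1 hk.2
        have e : w k / (s k - t m) = -(w k / (t m - s k)) := by
          rw [show s k - t m = -(t m - s k) from by ring, div_neg]
        rw [e]
        have : (19/20) * s m ≤ t m - s k := hg.1
        exact neg_nonpos.mpr (div_nonneg (le_of_lt (hwp k hk.1 (by omega)))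
          (by nlinarith))
  constructor
  · intro n hn
    rw [Finset.mem_Icc] at hn
    obtain ⟨hn1, hn2⟩ := hn
    have hcast : (n:ℤ) - ((M+2:ℕ):ℤ) + 1 = -(((M+1-n : ℕ)):ℤ) := by omega
    rw [hcast, zpow_neg, zpow_natCast]
    have hn11 : 1 ≤ n+1 := by omega
    have hn12 : n+1 ≤ M+1 := by omega
    have hwn := hwp n hn1 (by omega)
    have hwn1 := hwp (n+1) hn11 hn12
    have hsn := hsp n hn1 (by omega)
    have hsn1 := hsp (n+1) hn11 hn12
    have hsnn : 1000 * s n < s (n+1) := hsm (n+1) n hn1 (by omega) hn12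
    have hin := hint n (Finset.mem_Icc.mpr ⟨hn1, by omega⟩)
    have hin1 := hint (n+1) (Finset.mem_Icc.mpr ⟨hn11, hn12⟩)
    have htn1l := htlow (n+1) hn11 hn12
    have htnl := htlow n hn1 (by omega)
    have hdn := hdp n hn1 (by omega)
    have hdn1 := hdp (n+1) hn11 hn12
    have hsnb : 1000 * s (n+1) ≤ b := by
      have := hsle (n+1) (M+1) hn11 (by omega) (le_refl _)
      linarith
    have hPp : (0:ℝ) < kap ^ (M+1-n) := pow_pos hk0 _
    have hεp : (0:ℝ) < (kap ^ (M+1-n))⁻¹ := inv_pos.mpr hPp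
    have hεP : (kap ^ (M+1-n))⁻¹ * kap ^ (M+1-n) = 1 := inv_mul_cancel₀ (ne_of_gt hPp)
    have hkP : kap ≤ kap ^ (M+1-n) := by
      calc kap = kap ^ 1 := (pow_one kap).symm
        _ ≤ kap ^ (M+1-n) := pow_le_pow_right₀ (by linarith) (by omega)
    have hε10 : 10 * (kap ^ (M+1-n))⁻¹ ≤ 1 := by
      have h1 : (kap ^ (M+1-n))⁻¹ * kap ≤ 1 := by
        linarith [mul_le_mul_of_nonneg_left hkP (le_of_lt hεp), hεP]
      linarith [h1, mul_nonneg (show (0:ℝ) ≤ kap - 10 by linarith) (le_of_lt hεp)]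
    have hwP : 10 * (w (n+1) * kap^(M+1-n)) ≤ b * s (n+1) := by
      have h3 := hwsb (n+1) hn11 hn12
      have e : kap^(M+1-(n+1)) * kap = kap^(M+1-n) := by
        rw [← pow_succ]; congr 1; omega
      rw [← e]
      linarith [h3]
    have hwn1e : 10 * w (n+1) ≤ (kap ^ (M+1-n))⁻¹ * (b * s (n+1)) := by
      have h4 := mul_le_mul_of_nonneg_left hwP (le_of_lt hεp)
      have h5 : (kap ^ (M+1-n))⁻¹ * (10 * (w (n+1) * kap^(M+1-n)))
          = 10 * w (n+1) * ((kap ^ (M+1-n))⁻¹ * kap^(M+1-n)) := by ring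
      rw [h5, hεP, mul_one] at h4
      exact h4
    have hwadjn := hwadj n hn1 hn2
    have hwne : 100000 * w n ≤ (kap ^ (M+1-n))⁻¹ * (b * s (n+1)) := by linarith
    -- root identity at n
    have hrtn := hroot n (Finset.mem_Icc.mpr ⟨hn1, by omega⟩)
    have hsplitn := sum_split (fun k => w k / (s k - t n)) n (M+1) hn1 (by omega)
    have hheadn := sum_head (fun k => w k / (s k - t n)) (n+1) (M+1) (by omega)
    rw [hsplitn, hheadn] at hrtn
    -- root identity at n+1
    have hrtn1 := hroot (n+1) (Finset.mem_Icc.mpr ⟨hn11, by omega⟩)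
    have hsplitn1 := sum_split (fun k => w k / (s k - t (n+1))) (n+1) (M+1) hn11 hn12
    simp only [Nat.add_sub_cancel] at hsplitn1
    have htopn1 := sum_split (fun k => w k / (s k - t (n+1))) n n hn1 (le_refl n)
    rw [show Finset.Icc (n+1) n = ∅ from Finset.Icc_eq_empty (by omega),
      Finset.sum_empty] at htopn1
    rw [hsplitn1, htopn1] at hrtn1
    -- bounds on sum pieces
    have hSan := hRneg n hn1 (by omega)
    have hSan1 := hRneg (n+1) hn11 hn12
    simp only [Nat.add_sub_cancel] at hSan1
    rw [htopn1] at hSan1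
    have hSbn := htails (n+2) (t n) (by omega) (fun k hk1 hk2 => by
      have h7 := hsm k n hn1 (by omega) hk2
      linarith [hin.1, hsn])
    have hSbn1 := htails (n+2) (t (n+1)) (by omega) (fun k hk1 hk2 => by
      have h7 := hsm k (n+1) hn11 (by omega) hk2
      linarith [hin1.1, hsn1])
    -- X3 and X4 bounds
    have hX3a : (1/2) * s (n+1) ≤ s (n+1) - t n := by linarith [hin.1]
    have hX3p : 0 < w (n+1)/(s (n+1) - t n) := div_pos hwn1 (by linarith)
    have hX3ub : w (n+1)/(s (n+1) - t n) ≤ (kap ^ (M+1-n))⁻¹ * b / 5 := by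
      have d2 : w (n+1)/(s (n+1) - t n) ≤ w (n+1)/((1/2) * s (n+1)) :=
        divmono_pos (le_of_lt hwn1) (by positivity) hX3a
      have d3 : w (n+1)/((1/2) * s (n+1)) ≤ (kap ^ (M+1-n))⁻¹ * b / 5 := by
        rw [div_le_div_iff₀ (by positivity) (by norm_num : (0:ℝ) < 5)]
        linarith [hwn1e]
      linarith
    have hX4a : (1/2) * s (n+1) ≤ t (n+1) - s n := by linarith [htn1l]
    have hX4n : w n/(s n - t (n+1)) ≤ 0 := by
      have e : w n/(s n - t (n+1)) = -(w n/(t (n+1) - s n)) := by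
        rw [show s n - t (n+1) = -(t (n+1) - s n) from by ring, div_neg]
      rw [e]
      exact neg_nonpos.mpr (div_nonneg (le_of_lt hwn) (by linarith))
    have hX4lb : -((kap ^ (M+1-n))⁻¹ * b / 1000) ≤ w n/(s n - t (n+1)) := by
      have e : w n/(s n - t (n+1)) = -(w n/(t (n+1) - s n)) := by
        rw [show s n - t (n+1) = -(t (n+1) - s n) from by ring, div_neg]
      have d2 : w n/(t (n+1) - s n) ≤ w n/((1/2) * s (n+1)) :=
        divmono_pos (le_of_lt hwn) (by positivity) hX4a
      have d3 : w n/((1/2) * s (n+1)) ≤ (kap ^ (M+1-n))⁻¹ * b / 1000 := by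
        rw [div_le_div_iff₀ (by positivity) (by norm_num : (0:ℝ) < 1000)]
        linarith [hwne]
      rw [e]
      linarith
    -- monotone comparisons of common pieces
    have hSaa : (∑ k ∈ Finset.Icc 1 (n-1), w k/(s k - t n))
        ≤ (∑ k ∈ Finset.Icc 1 (n-1), w k/(s k - t (n+1))) := by
      apply Finset.sum_le_sum
      intro k hk
      rw [Finset.mem_Icc] at hk
      have hkst : s k < t n := hslt n hn1 (by omega) k hk.1 (by omega)
      have htt : t n < t (n+1) := by linarith [hin.1, hin.2]
      exact divmono_neg (le_of_lt (hwp k hk.1 (by omega))) (by linarith) (by linarith)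
    have hSbb : (∑ k ∈ Finset.Icc (n+2) (M+1), w k/(s k - t n))
        ≤ (∑ k ∈ Finset.Icc (n+2) (M+1), w k/(s k - t (n+1))) := by
      apply Finset.sum_le_sum
      intro k hk
      rw [Finset.mem_Icc] at hk
      have h5 : s (n+1) ≤ s k := hsle (n+1) k hn11 (by omega) hk.2
      have htt : t n < t (n+1) := by linarith [hin.1, hin.2]
      exact divmono_pos (le_of_lt (hwp k (by omega) hk.2)) (by linarith [hin1.1]) (by linarith)
    -- B bounds
    have hBnpos : 0 < w n/(s n - t n) := div_pos hwn hdn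
    have hBn1pos : 0 < w (n+1)/(s (n+1) - t (n+1)) := div_pos hwn1 hdn1
    have hεb : (kap ^ (M+1-n))⁻¹ * b ≤ b / 10 := by
      linarith [mul_le_mul_of_nonneg_right hε10 (le_of_lt hbp)]
    have hBnlb : 24/25 * b ≤ w n/(s n - t n) := by
      have h7 : s n ≤ s (M+1) := hsle n (M+1) hn1 (by omega) (le_refl _)
      have h8 : w (n+1)/(s (n+1) - t n) ≤ b/50 := by linarith [hX3ub, hεb]
      linarith [hrtn, hSan.2, hSbn.2, hsb, hin.1]
    have hBnub : w n/(s n - t n) ≤ 101/100 * b := by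
      have h9 : 0 < t n := by linarith [htnl]
      linarith [hrtn, hSan.1, hSbn.1, hX3p, h9]
    have hBn1ub : w (n+1)/(s (n+1) - t (n+1)) ≤ 101/100 * b := by
      have h9 : 0 < t (n+1) := by linarith [htn1l]
      linarith [hrtn1, hSan1.1, hSbn1.1, h9]
    have hdiffB : w (n+1)/(s (n+1) - t (n+1)) ≤ w n/(s n - t n)
        + (21/100) * ((kap ^ (M+1-n))⁻¹ * b) := by
      have htt : t n < t (n+1) := by linarith [hin.1, hin.2]
      linarith [hrtn, hrtn1, hSaa, hSbb, hX3ub, hX4lb, htt]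
    -- split of the square-sum at n+1
    have hA1split := sum_split (fun k => w k / (s k - t (n+1))^2) (n+1) (M+1) hn11 hn12
    simp only [Nat.add_sub_cancel] at hA1split
    have hSU1 : (∑ k ∈ Finset.Icc 1 n, w k / (s k - t (n+1))^2)
        ≤ 5 * (w n / s (n+1)^2) := by
      have hp : ∀ k ∈ Finset.Icc 1 n, w k / (s k - t (n+1))^2 ≤ w k * (4 / s (n+1)^2) := by
        intro k hk
        rw [Finset.mem_Icc] at hk
        have h5 : s k ≤ s n := hsle k n hk.1 hk.2 (by omega)
        have h6 : (1/2) * s (n+1) ≤ t (n+1) - s k := by linarith [hX4a]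
        have h7 : (1/4) * s (n+1)^2 ≤ (s k - t (n+1))^2 := by
          linarith [mul_le_mul h6 h6 (by positivity) (by linarith)]
        have h8 : w k / (s k - t (n+1))^2 ≤ w k / ((1/4) * s (n+1)^2) :=
          divmono_pos (le_of_lt (hwp k hk.1 (by omega))) (by positivity) h7
        have h9 : w k / ((1/4) * s (n+1)^2) = w k * (4 / s (n+1)^2) := by
          field_simp
        linarith
      have h10 := Finset.sum_le_sum hp
      have h11 : (∑ k ∈ Finset.Icc 1 n, w k * (4 / s (n+1)^2))
          = (∑ k ∈ Finset.Icc 1 n, w k) * (4 / s (n+1)^2) := by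
        rw [← Finset.sum_mul]
      have h12 := hhead n hn1 (by omega)
      have h13 : (0:ℝ) < 4 / s (n+1)^2 := by positivity
      have h14 : (∑ k ∈ Finset.Icc 1 n, w k) * (4 / s (n+1)^2)
          ≤ ((10000/9999) * w n) * (4/s (n+1)^2) :=
        mul_le_mul_of_nonneg_right (by linarith) (le_of_lt h13)
      have e : w n * (4 / s (n+1)^2) = 4 * (w n / s (n+1)^2) := by ring
      have hq : (0:ℝ) ≤ w n / s (n+1)^2 := by positivity
      linarith [h10, h11, h14, e, hq]
    have hSU2 : (∑ k ∈ Finset.Icc (n+2) (M+1), w k / (s k - t (n+1))^2)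
        ≤ (1/2) * (w (n+1) / s (n+1)^2) := by
      have hp : ∀ k ∈ Finset.Icc (n+2) (M+1),
          w k / (s k - t (n+1))^2 ≤ 4 * (w k / s k^2) := by
        intro k hk
        rw [Finset.mem_Icc] at hk
        have h5 := hsm k (n+1) hn11 (by omega) hk.2
        have hsk := hsp k (by omega) hk.2
        have h6 : (1/2) * s k ≤ s k - t (n+1) := by linarith [hin1.1]
        have h7 : (1/4) * s k^2 ≤ (s k - t (n+1))^2 := by
          linarith [mul_le_mul h6 h6 (by positivity) (by linarith)]
        have h8 := divmono_pos (le_of_lt (hwp k (by omega) hk.2))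
          (show (0:ℝ) < (1/4) * s k^2 by positivity) h7
        have h9 : w k / ((1/4) * s k^2) = 4 * (w k / s k^2) := by
          field_simp
        linarith
      have h10 := Finset.sum_le_sum hp
      have h11 : (∑ k ∈ Finset.Icc (n+2) (M+1), 4 * (w k / s k^2))
          = 4 * ∑ k ∈ Finset.Icc (n+2) (M+1), w k / s k^2 := by
        rw [Finset.mul_sum]
      have h12 := hU2 (n+1) hn11 hn12
      simp only [show n+1+1 = n+2 from by omega] at h12
      linarith [h12, div_nonneg (le_of_lt hwn1) (sq_nonneg (s (n+1)))]
    -- positivity of A terms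
    have hApos1 : (0:ℝ) < 1 + ∑ k ∈ Finset.Icc 1 (M+1), w k / (s k - t n)^2 := by
      have h0 : 0 ≤ ∑ k ∈ Finset.Icc 1 (M+1), w k / (s k - t n)^2 :=
        Finset.sum_nonneg (fun k hk => by
          rw [Finset.mem_Icc] at hk
          exact div_nonneg (le_of_lt (hwp k hk.1 hk.2)) (sq_nonneg _))
      linarith
    have hApos2 : (0:ℝ) < 1 + ∑ k ∈ Finset.Icc 1 (M+1), w k / (s k - t (n+1))^2 := by
      have h0 : 0 ≤ ∑ k ∈ Finset.Icc 1 (M+1), w k / (s k - t (n+1))^2 :=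
        Finset.sum_nonneg (fun k hk => by
          rw [Finset.mem_Icc] at hk
          exact div_nonneg (le_of_lt (hwp k hk.1 hk.2)) (sq_nonneg _))
      linarith
    have hsingle : w n / (s n - t n)^2 ≤ ∑ k ∈ Finset.Icc 1 (M+1), w k / (s k - t n)^2 :=
      Finset.single_le_sum (f := fun k => w k / (s k - t n)^2)
        (fun k hk => by
          rw [Finset.mem_Icc] at hk
          exact div_nonneg (le_of_lt (hwp k hk.1 hk.2)) (sq_nonneg _))
        (Finset.mem_Icc.mpr ⟨hn1, by omega⟩)
    have ebr1 : w n * (w n / (s n - t n)^2) = (w n / (s n - t n))^2 := by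
      rw [div_pow]
      ring
    have ebr2 : w (n+1) * (w (n+1) / (s (n+1) - t (n+1))^2)
        = (w (n+1) / (s (n+1) - t (n+1)))^2 := by
      rw [div_pow]
      ring
    have hq0 : (0:ℝ) < (kap ^ (M+1-n))⁻¹ * b := by positivity
    have hsq : (w (n+1) / (s (n+1) - t (n+1)))^2 ≤ (w n / (s n - t n))^2
        + (21/100) * ((kap ^ (M+1-n))⁻¹ * b)
          * (w n / (s n - t n) + w (n+1) / (s (n+1) - t (n+1))) := by
      have hfac := mul_nonneg
        (show (0:ℝ) ≤ (w n/(s n - t n)) + (w (n+1)/(s (n+1) - t (n+1))) by linarith)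
        (show (0:ℝ) ≤ (w n/(s n - t n)) + (21/100) * ((kap ^ (M+1-n))⁻¹ * b)
          - (w (n+1)/(s (n+1) - t (n+1))) by linarith)
      linarith [hfac]
    have hbn2 : (24/25 * b)^2 ≤ (w n / (s n - t n))^2 := by
      linarith [mul_le_mul hBnlb hBnlb (by linarith : (0:ℝ) ≤ 24/25*b) (le_of_lt hBnpos)]
    have hδB : (21/100) * ((kap ^ (M+1-n))⁻¹ * b)
        * (w n/(s n - t n) + w (n+1)/(s (n+1) - t (n+1)))
        ≤ (43/100) * ((kap^(M+1-n))⁻¹ * b^2) := by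
      have h1 : ((kap ^ (M+1-n))⁻¹ * b)
          * (w n/(s n - t n) + w (n+1)/(s (n+1) - t (n+1)))
          ≤ ((kap ^ (M+1-n))⁻¹ * b) * (202/100 * b) :=
        mul_le_mul_of_nonneg_left (by linarith [hBnub, hBn1ub]) (le_of_lt hq0)
      linarith [h1, mul_nonneg (le_of_lt hεp) (sq_nonneg b)]
    have hw1b : w (n+1) ≤ (1/10000) * ((kap^(M+1-n))⁻¹ * b^2) := by
      have h1 := mul_le_mul_of_nonneg_left hsnb (le_of_lt hq0)
      linarith [hwn1e, h1]
    have hU1b : w (n+1) * (∑ k ∈ Finset.Icc 1 n, w k/(s k - t (n+1))^2)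
        ≤ (1/1000) * ((kap^(M+1-n))⁻¹ * b^2) := by
      have h1 : w (n+1) * (∑ k ∈ Finset.Icc 1 n, w k/(s k - t (n+1))^2)
          ≤ w (n+1) * (5 * (w n / s (n+1)^2)) :=
        mul_le_mul_of_nonneg_left hSU1 (le_of_lt hwn1)
      have h2 : w (n+1) * (5 * (w n / s (n+1)^2)) ≤ (1/1000) * ((kap^(M+1-n))⁻¹ * b^2) := by
        rw [show w (n+1) * (5 * (w n / s (n+1)^2))
            = (5 * (w (n+1) * w n)) / s (n+1)^2 from by ring,
          div_le_iff₀ (by positivity)]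
        have h3 := mul_le_mul hwn1e hwne (by positivity) (by positivity)
        have h4 : ((kap^(M+1-n))⁻¹ * (b * s (n+1))) * ((kap^(M+1-n))⁻¹ * (b * s (n+1)))
            ≤ (1/10) * ((kap^(M+1-n))⁻¹ * (b * s (n+1))^2) := by
          linarith [mul_nonneg (mul_nonneg
            (show (0:ℝ) ≤ 1 - 10*(kap^(M+1-n))⁻¹ by linarith)
            (le_of_lt hεp)) (sq_nonneg (b * s (n+1)))]
        linarith [h3, h4, mul_nonneg (le_of_lt hεp) (sq_nonneg (b * s (n+1)))]
      linarith
    have hU2b : w (n+1) * (∑ k ∈ Finset.Icc (n+2) (M+1), w k/(s k - t (n+1))^2)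
        ≤ (1/1000) * ((kap^(M+1-n))⁻¹ * b^2) := by
      have h1 : w (n+1) * (∑ k ∈ Finset.Icc (n+2) (M+1), w k/(s k - t (n+1))^2)
          ≤ w (n+1) * ((1/2) * (w (n+1) / s (n+1)^2)) :=
        mul_le_mul_of_nonneg_left hSU2 (le_of_lt hwn1)
      have h2 : w (n+1) * ((1/2) * (w (n+1) / s (n+1)^2))
          ≤ (1/1000) * ((kap^(M+1-n))⁻¹ * b^2) := by
        rw [show w (n+1) * ((1/2) * (w (n+1) / s (n+1)^2))
            = ((1/2) * (w (n+1) * w (n+1))) / s (n+1)^2 from by ring,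
          div_le_iff₀ (by positivity)]
        have h3 := mul_le_mul hwn1e hwn1e (by positivity) (by positivity)
        have h4 : ((kap^(M+1-n))⁻¹ * (b * s (n+1))) * ((kap^(M+1-n))⁻¹ * (b * s (n+1)))
            ≤ (1/10) * ((kap^(M+1-n))⁻¹ * (b * s (n+1))^2) := by
          linarith [mul_nonneg (mul_nonneg
            (show (0:ℝ) ≤ 1 - 10*(kap^(M+1-n))⁻¹ by linarith)
            (le_of_lt hεp)) (sq_nonneg (b * s (n+1)))]
        linarith [h3, h4, mul_nonneg (le_of_lt hεp) (sq_nonneg (b * s (n+1)))]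
      linarith
    have hAnlb : w n + (w n/(s n - t n))^2
        ≤ w n * (1 + ∑ k ∈ Finset.Icc 1 (M+1), w k/(s k - t n)^2) := by
      have h1 := mul_le_mul_of_nonneg_left hsingle (le_of_lt hwn)
      linarith [ebr1, h1]
    have hL : w (n+1) * (1 + ∑ k ∈ Finset.Icc 1 (M+1), w k/(s k - t (n+1))^2)
        = w (n+1) + w (n+1) * (∑ k ∈ Finset.Icc 1 n, w k/(s k - t (n+1))^2)
          + (w (n+1)/(s (n+1) - t (n+1)))^2
          + w (n+1) * (∑ k ∈ Finset.Icc (n+2) (M+1), w k/(s k - t (n+1))^2) := by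
      rw [hA1split]
      linear_combination ebr2
    have h3' : (44/100) * ((kap^(M+1-n))⁻¹ * b^2)
        ≤ 2 * ((kap^(M+1-n))⁻¹ * (w n/(s n - t n))^2) := by
      linarith [mul_le_mul_of_nonneg_left hbn2 (le_of_lt hεp)]
    have hεwn : 0 < (kap^(M+1-n))⁻¹ * w n := by positivity
    have hmain : w (n+1) * (1 + ∑ k ∈ Finset.Icc 1 (M+1), w k/(s k - t (n+1))^2)
        < (1 + (kap^(M+1-n))⁻¹)^2
          * (w n * (1 + ∑ k ∈ Finset.Icc 1 (M+1), w k/(s k - t n)^2)) := by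
      have hAu : (0:ℝ) ≤ w n * (1 + ∑ k ∈ Finset.Icc 1 (M+1), w k/(s k - t n)^2) :=
        le_of_lt (mul_pos hwn hApos1)
      have hεsq : (1 + 2*(kap^(M+1-n))⁻¹)
            * (w n * (1 + ∑ k ∈ Finset.Icc 1 (M+1), w k/(s k - t n)^2))
          ≤ (1 + (kap^(M+1-n))⁻¹)^2
            * (w n * (1 + ∑ k ∈ Finset.Icc 1 (M+1), w k/(s k - t n)^2)) := by
        have : (1 + 2*(kap^(M+1-n))⁻¹) ≤ (1 + (kap^(M+1-n))⁻¹)^2 := by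
          linarith [sq_nonneg ((kap^(M+1-n))⁻¹)]
        exact mul_le_mul_of_nonneg_right this hAu
      have h2 : (1 + 2*(kap^(M+1-n))⁻¹) * (w n + (w n/(s n - t n))^2)
          ≤ (1 + 2*(kap^(M+1-n))⁻¹)
            * (w n * (1 + ∑ k ∈ Finset.Icc 1 (M+1), w k/(s k - t n)^2)) :=
        mul_le_mul_of_nonneg_left hAnlb (by linarith)
      linarith [hL, hU1b, hU2b, hw1b, hsq, hδB, h3', h2, hεsq, hwn, hεp, hεwn]
    rw [hμ n (Finset.mem_Icc.mpr ⟨hn1, by omega⟩),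
      hμ (n+1) (Finset.mem_Icc.mpr ⟨hn11, by omega⟩)]
    have hinv : (1 + ∑ k ∈ Finset.Icc 1 (M+1), w k / (s k - t (n+1))^2)⁻¹
        / (1 + ∑ k ∈ Finset.Icc 1 (M+1), w k / (s k - t n)^2)⁻¹
        = (1 + ∑ k ∈ Finset.Icc 1 (M+1), w k / (s k - t n)^2)
          / (1 + ∑ k ∈ Finset.Icc 1 (M+1), w k / (s k - t (n+1))^2) := by
      rw [div_eq_mul_inv, inv_inv, div_eq_mul_inv]
      ring
    rw [hinv]
    rw [show (1 + (kap^(M+1-n))⁻¹)^2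
        * ((1 + ∑ k ∈ Finset.Icc 1 (M+1), w k / (s k - t n)^2)
          / (1 + ∑ k ∈ Finset.Icc 1 (M+1), w k / (s k - t (n+1))^2))
        = ((1 + (kap^(M+1-n))⁻¹)^2
          * (1 + ∑ k ∈ Finset.Icc 1 (M+1), w k / (s k - t n)^2))
          / (1 + ∑ k ∈ Finset.Icc 1 (M+1), w k / (s k - t (n+1))^2) from by ring]
    rw [div_lt_div_iff₀ hwn hApos2]
    linarith [hmain]
  · -- second goal
    have hM1 : 1 ≤ M+1 := by omega
    have hw1 := hwp (M+1) hM1 (le_refl _)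
    have hs1' := hsp (M+1) hM1 (le_refl _)
    have hd1 := hdp (M+1) hM1 (le_refl _)
    have htl := htlow (M+1) hM1 (le_refl _)
    have hRn := hRneg (M+1) hM1 (le_refl _)
    simp only [Nat.add_sub_cancel] at hRn
    have hiM := hint (M+1) (Finset.mem_Icc.mpr ⟨hM1, le_refl _⟩)
    -- root identity at M+1 (no upper tail)
    have hrt := hroot (M+1) (Finset.mem_Icc.mpr ⟨hM1, by omega⟩)
    have hsplit := sum_split (fun k => w k/(s k - t (M+1))) (M+1) (M+1) hM1 (le_refl _)
    simp only [Nat.add_sub_cancel] at hsplit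
    rw [show Finset.Icc (M+1+1) (M+1) = ∅ from Finset.Icc_eq_empty (by omega),
      Finset.sum_empty] at hsplit
    rw [hsplit] at hrt
    -- B lower bound
    have hBl : 99/100 * b ≤ w (M+1)/(s (M+1) - t (M+1)) := by
      linarith [hRn.2, hsb, hrt, hiM.1, hs1']
    have hBpos : 0 < w (M+1)/(s (M+1) - t (M+1)) := div_pos hw1 hd1
    -- t (M+2) facts
    have htMb : s (M+1) < t (M+2) := hiM.2
    have hrtN := hroot (M+2) (Finset.mem_Icc.mpr ⟨by omega, le_refl _⟩)
    have hskN : ∀ k, 1 ≤ k → k ≤ M+1 → s k - t (M+2) < 0 := by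
      intro k h1 h2
      have := hsle k (M+1) h1 h2 (le_refl _)
      linarith
    have htNb : b < t (M+2) := by
      have hneg : (∑ k ∈ Finset.Icc 1 (M+1), w k/(s k - t (M+2))) < 0 := by
        have h0 : (∑ k ∈ Finset.Icc 1 (M+1), (0:ℝ)) = 0 := Finset.sum_const_zero
        have := Finset.sum_lt_sum_of_nonempty
          (show (Finset.Icc 1 (M+1)).Nonempty from ⟨1, Finset.mem_Icc.mpr ⟨le_refl 1, by omega⟩⟩)
          (show ∀ k ∈ Finset.Icc 1 (M+1), w k/(s k - t (M+2)) < (fun _ => (0:ℝ)) k from by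
            intro k hk
            rw [Finset.mem_Icc] at hk
            exact div_neg_of_pos_of_neg (hwp k hk.1 hk.2) (hskN k hk.1 hk.2))
        rw [h0] at this
        exact this
      linarith [hrtN]
    have htgap : ∀ k, 1 ≤ k → k ≤ M+1 → (1/2)*b ≤ t (M+2) - s k := by
      intro k h1 h2
      have := hsle k (M+1) h1 h2 (le_refl _)
      linarith [hsb, htNb]
    have hW100 : 100 * (∑ k ∈ Finset.Icc 1 (M+1), w k) ≤ b * s (M+1) := by
      linarith [mul_nonneg (show (0:ℝ) ≤ 10*kap - 100 by linarith) (le_of_lt hWp)]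
    have hWb2 : 100000 * (∑ k ∈ Finset.Icc 1 (M+1), w k) ≤ b^2 := by
      have h1 := mul_le_mul_of_nonneg_left hsb.le (show (0:ℝ) ≤ s (M+1) by linarith [hs1']) 
      nlinarith [hW100, h1, hs1', hbp]
    -- upper bound on t (M+2)
    have htNub : t (M+2) ≤ 10001/10000 * b := by
      have hp : ∀ k ∈ Finset.Icc 1 (M+1),
          -(w k * (2/b)) ≤ w k/(s k - t (M+2)) := by
        intro k hk
        rw [Finset.mem_Icc] at hk
        have hwk := hwp k hk.1 hk.2
        have hg := htgap k hk.1 hk.2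
        have e1 : w k/(s k - t (M+2)) = -(w k/(t (M+2) - s k)) := by
          rw [show s k - t (M+2) = -(t (M+2) - s k) from by ring, div_neg]
        have e2 : w k/(t (M+2) - s k) ≤ w k/((1/2)*b) :=
          divmono_pos (le_of_lt hwk) (by positivity) hg
        have e3 : w k/((1/2)*b) = w k * (2/b) := by
          field_simp
        rw [e1]
        linarith
      have h1 := Finset.sum_le_sum hp
      have h2 : (∑ k ∈ Finset.Icc 1 (M+1), -(w k * (2/b)))
          = -((∑ k ∈ Finset.Icc 1 (M+1), w k) * (2/b)) := by
        rw [Finset.sum_neg_distrib, Finset.sum_mul]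
      rw [h2] at h1
      have h3 : (∑ k ∈ Finset.Icc 1 (M+1), w k) * (2/b) ≤ 1/10000 * b := by
        rw [show (∑ k ∈ Finset.Icc 1 (M+1), w k) * (2/b)
            = (2 * (∑ k ∈ Finset.Icc 1 (M+1), w k))/b from by ring,
          div_le_iff₀ hbp]
        nlinarith [hWb2]
      linarith [hrtN, h1]
    -- A_N upper bound
    have hANub : (∑ k ∈ Finset.Icc 1 (M+1), w k/(s k - t (M+2))^2) ≤ 1/10000 := by
      have hp : ∀ k ∈ Finset.Icc 1 (M+1),
          w k/(s k - t (M+2))^2 ≤ w k * (4/b^2) := by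
        intro k hk
        rw [Finset.mem_Icc] at hk
        have hwk := hwp k hk.1 hk.2
        have hg := htgap k hk.1 hk.2
        have h7 : (1/4) * b^2 ≤ (s k - t (M+2))^2 := by
          linarith [mul_le_mul hg hg (by positivity) (by linarith)]
        have h8 : w k/(s k - t (M+2))^2 ≤ w k/((1/4) * b^2) :=
          divmono_pos (le_of_lt hwk) (by positivity) h7
        have h9 : w k/((1/4) * b^2) = w k * (4/b^2) := by
          field_simp
        linarith
      have h1 := Finset.sum_le_sum hp
      have h2 : (∑ k ∈ Finset.Icc 1 (M+1), w k * (4/b^2))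
          = (∑ k ∈ Finset.Icc 1 (M+1), w k) * (4/b^2) := by
        rw [Finset.sum_mul]
      have h3 : (∑ k ∈ Finset.Icc 1 (M+1), w k) * (4/b^2) ≤ 1/10000 := by
        rw [show (∑ k ∈ Finset.Icc 1 (M+1), w k) * (4/b^2)
            = (4 * (∑ k ∈ Finset.Icc 1 (M+1), w k))/b^2 from by ring,
          div_le_iff₀ (by positivity)]
        nlinarith [hWb2]
      linarith
    -- positivity of A terms
    have hApos1 : (0:ℝ) < 1 + ∑ k ∈ Finset.Icc 1 (M+1), w k / (s k - t (M+1))^2 := by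
      have h0 : 0 ≤ ∑ k ∈ Finset.Icc 1 (M+1), w k / (s k - t (M+1))^2 :=
        Finset.sum_nonneg (fun k hk => by
          rw [Finset.mem_Icc] at hk
          exact div_nonneg (le_of_lt (hwp k hk.1 hk.2)) (sq_nonneg _))
      linarith
    have hApos2 : (0:ℝ) < 1 + ∑ k ∈ Finset.Icc 1 (M+1), w k / (s k - t (M+2))^2 := by
      have h0 : 0 ≤ ∑ k ∈ Finset.Icc 1 (M+1), w k / (s k - t (M+2))^2 :=
        Finset.sum_nonneg (fun k hk => by
          rw [Finset.mem_Icc] at hk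
          exact div_nonneg (le_of_lt (hwp k hk.1 hk.2)) (sq_nonneg _))
      linarith
    have hAN0 : 0 ≤ ∑ k ∈ Finset.Icc 1 (M+1), w k / (s k - t (M+2))^2 :=
      Finset.sum_nonneg (fun k hk => by
        rw [Finset.mem_Icc] at hk
        exact div_nonneg (le_of_lt (hwp k hk.1 hk.2)) (sq_nonneg _))
    have hsingle : w (M+1) / (s (M+1) - t (M+1))^2
        ≤ ∑ k ∈ Finset.Icc 1 (M+1), w k / (s k - t (M+1))^2 :=
      Finset.single_le_sum (f := fun k => w k / (s k - t (M+1))^2)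
        (fun k hk => by
          rw [Finset.mem_Icc] at hk
          exact div_nonneg (le_of_lt (hwp k hk.1 hk.2)) (sq_nonneg _))
        (Finset.mem_Icc.mpr ⟨hM1, le_refl _⟩)
    have ebr : w (M+1) * (w (M+1) / (s (M+1) - t (M+1))^2)
        = (w (M+1) / (s (M+1) - t (M+1)))^2 := by
      rw [div_pow]
      ring
    have hAmlb : w (M+1) + (w (M+1)/(s (M+1) - t (M+1)))^2
        ≤ w (M+1) * (1 + ∑ k ∈ Finset.Icc 1 (M+1), w k / (s k - t (M+1))^2) := by
      have h1 := mul_le_mul_of_nonneg_left hsingle (le_of_lt hw1)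
      linarith [ebr, h1]
    have htmpos : 0 < t (M+1) := by linarith [htl, hs1']
    have htNpos : 0 < t (M+2) := by linarith [htNb, hbp]
    -- the key product estimate
    have hwsb1 := hwsb (M+1) hM1 (le_refl _)
    rw [show M+1-(M+1) = 0 from by omega, pow_zero, mul_one] at hwsb1
    have hB2 : 9801/10000 * b^2 ≤ (w (M+1)/(s (M+1) - t (M+1)))^2 := by
      linarith [mul_le_mul hBl hBl (by linarith : (0:ℝ) ≤ 99/100*b) (le_of_lt hBpos)]
    have hstep : 9*(kap*b) * w (M+1)
        ≤ ((1 + ∑ k ∈ Finset.Icc 1 (M+1), w k / (s k - t (M+1))^2) * t (M+1)) * w (M+1) := by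
      have h1 : (w (M+1) + (w (M+1)/(s (M+1) - t (M+1)))^2) * t (M+1)
          ≤ (w (M+1) * (1 + ∑ k ∈ Finset.Icc 1 (M+1), w k / (s k - t (M+1))^2)) * t (M+1) :=
        mul_le_mul_of_nonneg_right hAmlb (le_of_lt htmpos)
      have h2 : (w (M+1)/(s (M+1) - t (M+1)))^2 * (49/50 * s (M+1))
          ≤ (w (M+1)/(s (M+1) - t (M+1)))^2 * t (M+1) :=
        mul_le_mul_of_nonneg_left htl (sq_nonneg _)
      have h5 : 9*(kap*b)*w (M+1) ≤ (9/10)*(b^2*s (M+1)) := by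
        have h6 := mul_le_mul_of_nonneg_left hwsb1 (le_of_lt hbp)
        linarith [h6]
      have h7 : (9/10)*(b^2*s (M+1)) ≤ (w (M+1)/(s (M+1) - t (M+1)))^2 * (49/50 * s (M+1)) := by
        have h8 := mul_le_mul_of_nonneg_right hB2 (le_of_lt hs1')
        linarith [h8, mul_nonneg (sq_nonneg b) (le_of_lt hs1')]
      have h9 : 0 ≤ w (M+1) * t (M+1) := le_of_lt (mul_pos hw1 htmpos)
      nlinarith [h1, h2, h5, h7, h9]
    have hfin1 : 9*(kap*b)
        ≤ (1 + ∑ k ∈ Finset.Icc 1 (M+1), w k / (s k - t (M+1))^2) * t (M+1) :=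
      le_of_mul_le_mul_right hstep hw1
    have hfin2 : kap * t (M+2) * (1 + ∑ k ∈ Finset.Icc 1 (M+1), w k / (s k - t (M+2))^2)
        ≤ kap * (10001/10000 * b) * (1 + 1/10000) := by
      have g1 : kap * t (M+2) ≤ kap * (10001/10000 * b) :=
        mul_le_mul_of_nonneg_left htNub (le_of_lt hk0)
      apply mul_le_mul g1 (by linarith [hANub]) (by linarith [hAN0]) (by positivity)
    -- finish
    rw [hμ (M+2) (Finset.mem_Icc.mpr ⟨by omega, le_refl _⟩),
      hμ (M+1) (Finset.mem_Icc.mpr ⟨hM1, by omega⟩)]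
    have hinv : (1 + ∑ k ∈ Finset.Icc 1 (M+1), w k / (s k - t (M+2))^2)⁻¹
        / (1 + ∑ k ∈ Finset.Icc 1 (M+1), w k / (s k - t (M+1))^2)⁻¹
        = (1 + ∑ k ∈ Finset.Icc 1 (M+1), w k / (s k - t (M+1))^2)
          / (1 + ∑ k ∈ Finset.Icc 1 (M+1), w k / (s k - t (M+2))^2) := by
      rw [div_eq_mul_inv, inv_inv, div_eq_mul_inv]
      ring
    rw [hinv]
    rw [show kap * (t (M+2) / t (M+1)) = (kap * t (M+2)) / t (M+1) from by ring]
    rw [div_lt_div_iff₀ htmpos hApos2]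
    have hkb : 0 < kap * b := mul_pos hk0 hbp
    nlinarith [hfin1, hfin2, hkb]
end

section
/- Suppose Σ_{k=1}^N μ_k/(t_k - s_n) = 0 and Σ_{k=1}^N μ_k/(t_k - s_{n+1}) = 0, where t_1 < s_1 < t_2 < ... < s_{N-1} < t_N. Then μ_{n+1}/(s_{n+1} - t_{n+1}) = (μ_n/(s_n - t_n))·(t_{n+1} - s_n)/(s_{n+1} - t_n) + Σ_{k≠n,n+1} μ_k (t_{n+1} - s_n)/((s_{n+1} - t_k)(s_n - t_k)). -/
/-- Identity obtained by subtracting the zero equation at `s_n` from the one at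
`s_{n+1}` for consecutive zeros of the Cauchy transform. -/
theorem stmt18 (N n : ℕ) (μ t s : ℕ → ℝ)
    (hμpos : ∀ k ∈ Finset.Icc 1 N, 0 < μ k)
    (hint : ∀ k ∈ Finset.Icc 1 (N - 1), t k < s k ∧ s k < t (k + 1))
    (hn1 : 1 ≤ n) (hn2 : n ≤ N - 2)
    (hroot1 : ∑ k ∈ Finset.Icc 1 N, μ k / (t k - s n) = 0)
    (hroot2 : ∑ k ∈ Finset.Icc 1 N, μ k / (t k - s (n + 1)) = 0) :
    μ (n + 1) / (s (n + 1) - t (n + 1)) =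
      μ n / (s n - t n) * ((t (n + 1) - s n) / (s (n + 1) - t n)) +
        ∑ k ∈ Finset.Icc 1 N \ {n, n + 1},
          μ k * (t (n + 1) - s n) / ((s (n + 1) - t k) * (s n - t k)) := by
  have hN : 3 ≤ N := by omega
  have hn2' : n + 1 ≤ N - 1 := by omega
  -- strict monotonicity of t on [1, N]
  have ht : ∀ i j : ℕ, 1 ≤ i → i < j → j ≤ N → t i < t j := by
    intro i j hi hij hj
    induction j with
    | zero => omega
    | succ m ih =>
      rcases eq_or_lt_of_le (Nat.lt_succ_iff.mp hij) with h | h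
      · subst h
        have hm := hint i (Finset.mem_Icc.mpr ⟨hi, by omega⟩)
        exact lt_trans hm.1 hm.2
      · have hm := hint m (Finset.mem_Icc.mpr ⟨by omega, by omega⟩)
        exact lt_trans (ih h (by omega)) (lt_trans hm.1 hm.2)
    -- t i < s j for i ≤ j, and s j < t i for j < i (in range)
  have hts : ∀ m : ℕ, 1 ≤ m → m ≤ N - 1 → ∀ k ∈ Finset.Icc 1 N, s m - t k ≠ 0 := by
    intro m hm1 hm2 k hk
    rw [Finset.mem_Icc] at hk
    have hm := hint m (Finset.mem_Icc.mpr ⟨hm1, hm2⟩)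
    rcases le_or_gt k m with h | h
    · -- t k ≤ t m < s m
      have : t k ≤ t m := by
        rcases eq_or_lt_of_le h with h' | h'
        · subst h'; exact le_refl _
        · exact le_of_lt (ht k m hk.1 h' (by omega))
      have : t k < s m := lt_of_le_of_lt this hm.1
      linarith
    · -- s m < t (m+1) ≤ t k
      have : t (m + 1) ≤ t k := by
        rcases eq_or_lt_of_le (Nat.succ_le_of_lt h) with h' | h'
        · subst h'; exact le_refl _
        · exact le_of_lt (ht (m + 1) k (by omega) h' hk.2)
      have : s m < t k := lt_of_lt_of_le hm.2 this
      linarith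
  have hsn := hts n hn1 (by omega)
  have hsn1 := hts (n + 1) (by omega) hn2'
  have hnmem : n ∈ Finset.Icc 1 N := Finset.mem_Icc.mpr ⟨hn1, by omega⟩
  have hn1mem : n + 1 ∈ Finset.Icc 1 N := Finset.mem_Icc.mpr ⟨by omega, by omega⟩
  -- s n < s (n+1)
  have hss : s n < s (n + 1) := by
    have h1 := hint n (Finset.mem_Icc.mpr ⟨hn1, by omega⟩)
    have h2 := hint (n + 1) (Finset.mem_Icc.mpr ⟨by omega, hn2'⟩)
    linarith
  have hssne : s (n + 1) - s n ≠ 0 := by linarith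
  -- rewrite root equations
  have eq1 : ∑ k ∈ Finset.Icc 1 N, μ k / (s n - t k) = 0 := by
    have : ∑ k ∈ Finset.Icc 1 N, μ k / (s n - t k)
        = -∑ k ∈ Finset.Icc 1 N, μ k / (t k - s n) := by
      rw [← Finset.sum_neg_distrib]
      apply Finset.sum_congr rfl
      intro k _
      rw [← div_neg, neg_sub]
    rw [this, hroot1, neg_zero]
  have eq2 : ∑ k ∈ Finset.Icc 1 N, μ k / (s (n + 1) - t k) = 0 := by
    have : ∑ k ∈ Finset.Icc 1 N, μ k / (s (n + 1) - t k)
        = -∑ k ∈ Finset.Icc 1 N, μ k / (t k - s (n + 1)) := by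
      rw [← Finset.sum_neg_distrib]
      apply Finset.sum_congr rfl
      intro k _
      rw [← div_neg, neg_sub]
    rw [this, hroot2, neg_zero]
  -- key derived equation
  have eq3 : ∑ k ∈ Finset.Icc 1 N, μ k / ((s n - t k) * (s (n + 1) - t k)) = 0 := by
    have hterm : ∀ k ∈ Finset.Icc 1 N,
        μ k / ((s n - t k) * (s (n + 1) - t k))
          = (μ k / (s n - t k) - μ k / (s (n + 1) - t k)) / (s (n + 1) - s n) := by
      intro k hk
      have h1 := hsn k hk
      have h2 := hsn1 k hk
      field_simp
      ring
    rw [Finset.sum_congr rfl hterm, ← Finset.sum_div, Finset.sum_sub_distrib, eq1, eq2]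
    simp
  -- split off terms n and n+1
  have hsub : ({n, n + 1} : Finset ℕ) ⊆ Finset.Icc 1 N := by
    intro k hk
    simp only [Finset.mem_insert, Finset.mem_singleton] at hk
    rcases hk with h | h <;> subst h <;> assumption
  have hsplit : ∀ f : ℕ → ℝ, ∑ k ∈ Finset.Icc 1 N, f k
      = f n + f (n + 1) + ∑ k ∈ Finset.Icc 1 N \ {n, n + 1}, f k := by
    intro f
    rw [← Finset.sum_sdiff hsub, Finset.sum_pair (by omega : n ≠ n + 1)]
    ring
  rw [hsplit] at eq3
  -- abbreviations
  set a := μ n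
  set b := μ (n + 1)
  set x1 := s n - t n with hx1def
  set x2 := s n - t (n + 1) with hx2def
  set y1 := s (n + 1) - t n with hy1def
  set y2 := s (n + 1) - t (n + 1) with hy2def
  have hx1 : x1 ≠ 0 := hsn n hnmem
  have hx2 : x2 ≠ 0 := hsn (n + 1) hn1mem
  have hy1 : y1 ≠ 0 := hsn1 n hnmem
  have hy2 : y2 ≠ 0 := hsn1 (n + 1) hn1mem
  set C := ∑ k ∈ Finset.Icc 1 N \ {n, n + 1}, μ k / ((s n - t k) * (s (n + 1) - t k))
    with hCdef
  have hC : C = -(a / (x1 * y1)) - b / (x2 * y2) := by linarith [eq3]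
  -- rewrite the target sum
  have hsum : ∑ k ∈ Finset.Icc 1 N \ {n, n + 1},
      μ k * (t (n + 1) - s n) / ((s (n + 1) - t k) * (s n - t k))
        = (t (n + 1) - s n) * C := by
    rw [hCdef, Finset.mul_sum]
    apply Finset.sum_congr rfl
    intro k hk
    have h1 := hsn k (Finset.mem_sdiff.mp hk).1
    have h2 := hsn1 k (Finset.mem_sdiff.mp hk).1
    field_simp
  rw [hsum, hC]
  have hts2 : t (n + 1) - s n = -x2 := by rw [hx2def]; ring
  rw [hts2]
  field_simp
  ring
end
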